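/- arXiv:math/0701674 — 8 statements merged into one kernel-verified Lean document; each statement's English description precedes it below -/
import Mathlib

section
/- For any monic polynomial p of degree n ≥ 2 whose zeros all lie in the closed disc of radius A ≥ 1, and any j ≥ 1, the maximum of |p^{(j)}(z)/p(z)| over the circle |z| = 2A is at most n(n-1)⋯(n-j+1)/A^j, and in particular at most n^j/A^j. -/
open Polynomial

lemma iter_deriv_sum (j : ℕ) (t : Multiset (Polynomial ℂ)) :
    derivative^[j] t.sum = (t.map (fun q => derivative^[j] q)).sum := by
  induction t using Multiset.induction with
  | empty => simp [iterate_map_zero]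
  | cons a t ih => simp [iterate_map_add, ih]

lemma abs_eval_prod (z : ℂ) (s : Multiset ℂ) :
    ‖((s.map (fun α => X - C α)).prod).eval z‖
      = (s.map (fun α => ‖z - α‖)).prod := by
  rw [eval_multiset_prod, Multiset.map_map, (map_multiset_prod (normHom (α := ℂ)) _ : ‖_‖ = (Multiset.map (fun x => ‖x‖) _).prod), Multiset.map_map]
  simp

lemma key (A : ℝ) (hA : 1 ≤ A) (z : ℂ) (j : ℕ) :
    ∀ s : Multiset ℂ, (∀ α ∈ s, A ≤ ‖z - α‖) →
    ‖(derivative^[j] (s.map (fun α => X - C α)).prod).eval z‖ * A ^ j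
      ≤ (Nat.descFactorial s.card j : ℝ) *
        (s.map (fun α => ‖z - α‖)).prod := by
  induction j with
  | zero =>
    intro s hs
    simp only [Function.iterate_zero, id, pow_zero, mul_one, Nat.descFactorial_zero,
      Nat.cast_one, one_mul]
    rw [abs_eval_prod]
  | succ j ih =>
    intro s hs
    rcases eq_or_ne s 0 with rfl | hne
    · simp [iterate_map_zero]
    obtain ⟨a0, ha0⟩ := Multiset.exists_mem_of_ne_zero hne
    have hcard : s.card = (s.card - 1) + 1 := (Nat.succ_pred_eq_of_pos
      (Multiset.card_pos.mpr hne)).symm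
    have hA0 : (0:ℝ) < A := lt_of_lt_of_le one_pos hA
    rw [Function.iterate_succ_apply]
    classical
    rw [derivative_prod]
    have hmap : (Multiset.map (fun i => (Multiset.map (fun α => X - C α) (s.erase i)).prod *
        derivative (X - C i)) s) = s.map (fun i => (Multiset.map (fun α => X - C α) (s.erase i)).prod) := by
      apply Multiset.map_congr rfl
      intro x hx
      simp
    rw [hmap, iter_deriv_sum]
    have heval : eval z ((Multiset.map (fun q => derivative^[j] q)
        (s.map (fun i => (Multiset.map (fun α => X - C α) (s.erase i)).prod))).sum)
        = (s.map (fun i => eval z (derivative^[j]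
            (Multiset.map (fun α => X - C α) (s.erase i)).prod))).sum := by
      have := map_multiset_sum (evalRingHom z) ((Multiset.map (fun q => derivative^[j] q)
        (s.map (fun i => (Multiset.map (fun α => X - C α) (s.erase i)).prod))))
      simpa [Multiset.map_map, Function.comp] using this
    rw [heval]
    set F : ℂ → ℝ := fun i => ‖eval z (derivative^[j]
        (Multiset.map (fun α => X - C α) (s.erase i)).prod)‖ with hF
    have habs : ‖(s.map (fun i => eval z (derivative^[j]
        (Multiset.map (fun α => X - C α) (s.erase i)).prod))).sum‖ ≤ (s.map F).sum := by
      simpa [Multiset.map_map, Function.comp, hF]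
        using norm_multiset_sum_le (s.map (fun i => eval z (derivative^[j]
          (Multiset.map (fun α => X - C α) (s.erase i)).prod)))
    have hterm : ∀ x ∈ s, F x * A ^ (j+1)
        ≤ (Nat.descFactorial (s.card - 1) j : ℝ) *
          (s.map (fun α => ‖z - α‖)).prod := by
      intro x hx
      have h1 := ih (s.erase x) (fun α hα => hs α (Multiset.mem_of_mem_erase hα))
      rw [Multiset.card_erase_of_mem hx, Nat.pred_eq_sub_one] at h1
      have hprodnn : (0:ℝ) ≤ ((s.erase x).map (fun α => ‖z - α‖)).prod :=
        Multiset.prod_nonneg (by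
          intro r hr
          obtain ⟨i, hi, rfl⟩ := Multiset.mem_map.mp hr
          positivity)
      have h2 : ((s.erase x).map (fun α => ‖z - α‖)).prod * A
          ≤ (s.map (fun α => ‖z - α‖)).prod := by
        conv_rhs => rw [← Multiset.cons_erase hx]
        rw [Multiset.map_cons, Multiset.prod_cons, mul_comm]
        exact mul_le_mul_of_nonneg_right (hs x hx) hprodnn
      calc F x * A ^ (j+1) = F x * A ^ j * A := by ring
        _ ≤ ((Nat.descFactorial (s.card - 1) j : ℝ) *
            ((s.erase x).map (fun α => ‖z - α‖)).prod) * A :=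
            mul_le_mul_of_nonneg_right h1 hA0.le
        _ = (Nat.descFactorial (s.card - 1) j : ℝ) *
            (((s.erase x).map (fun α => ‖z - α‖)).prod * A) := by ring
        _ ≤ _ := mul_le_mul_of_nonneg_left h2 (Nat.cast_nonneg _)
    have hsum : (s.map (fun i => F i * A ^ (j+1))).sum
        ≤ (s.card : ℝ) * ((Nat.descFactorial (s.card - 1) j : ℝ) *
          (s.map (fun α => ‖z - α‖)).prod) := by
      have := Multiset.sum_le_card_nsmul (s.map (fun i => F i * A ^ (j+1)))
        ((Nat.descFactorial (s.card - 1) j : ℝ) *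
          (s.map (fun α => ‖z - α‖)).prod) (by
            intro x hx
            obtain ⟨i, hi, rfl⟩ := Multiset.mem_map.mp hx
            exact hterm i hi)
      simpa [nsmul_eq_mul] using this
    have hmul : (s.map (fun i => F i * A ^ (j+1))).sum = (s.map F).sum * A ^ (j+1) := by
      rw [← Multiset.sum_map_mul_right]
    have hdesc : (s.card : ℝ) * (Nat.descFactorial (s.card - 1) j : ℝ)
        = (Nat.descFactorial s.card (j+1) : ℝ) := by
      rw [hcard, Nat.succ_descFactorial_succ]
      push_cast
      ring
    calc ‖(s.map (fun i => eval z (derivative^[j]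
          (Multiset.map (fun α => X - C α) (s.erase i)).prod))).sum‖ * A ^ (j+1)
        ≤ (s.map F).sum * A ^ (j+1) := by gcongr
      _ = (s.map (fun i => F i * A ^ (j+1))).sum := hmul.symm
      _ ≤ (s.card : ℝ) * ((Nat.descFactorial (s.card - 1) j : ℝ) *
          (s.map (fun α => ‖z - α‖)).prod) := hsum
      _ = _ := by rw [← mul_assoc, hdesc]

theorem stmt1 (p : Polynomial ℂ) (n : ℕ) (A : ℝ)
    (hmonic : p.Monic) (hdeg : p.natDegree = n) (hn : 2 ≤ n) (hA : 1 ≤ A)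
    (hroots : ∀ α ∈ p.roots, ‖α‖ ≤ A)
    (j : ℕ) (hj : 1 ≤ j)
    (z : ℂ) (hz : ‖z‖ = 2 * A) :
    ‖(Polynomial.derivative^[j] p).eval z / p.eval z‖
      ≤ (Nat.descFactorial n j : ℝ) / A ^ j ∧
    ‖(Polynomial.derivative^[j] p).eval z / p.eval z‖
      ≤ (n : ℝ) ^ j / A ^ j := by
  have hA0 : (0:ℝ) < A := lt_of_lt_of_le one_pos hA
  have hsplits : Splits p := IsAlgClosed.splits p
  have hcard : p.roots.card = n := by
    rw [(splits_iff_card_roots).mp hsplits, hdeg]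
  have hp : p = (p.roots.map (fun a => X - C a)).prod :=
    hsplits.eq_prod_roots_of_monic hmonic
  have hdist : ∀ α ∈ p.roots, A ≤ ‖z - α‖ := by
    intro α hα
    have h1 : ‖z‖ - ‖α‖ ≤ ‖z - α‖ := by
      simpa using norm_sub_norm_le z α
    have := hroots α hα
    linarith [hz ▸ h1]
  have hkey := key A hA z j p.roots hdist
  rw [← hp, hcard] at hkey
  have habsp : ‖p.eval z‖ = (p.roots.map (fun α => ‖z - α‖)).prod := by
    conv_lhs => rw [hp]
    exact abs_eval_prod z p.roots
  have hpos : (0:ℝ) < ‖p.eval z‖ := by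
    rw [habsp]
    apply Multiset.prod_pos
    intro r hr
    obtain ⟨i, hi, rfl⟩ := Multiset.mem_map.mp hr
    exact lt_of_lt_of_le hA0 (hdist i hi)
  rw [← habsp] at hkey
  have hApow : (0:ℝ) < A ^ j := pow_pos hA0 j
  have h1 : ‖(Polynomial.derivative^[j] p).eval z / p.eval z‖
      ≤ (Nat.descFactorial n j : ℝ) / A ^ j := by
    rw [norm_div, div_le_div_iff₀ hpos hApow]
    calc ‖eval z (derivative^[j] p)‖ * A ^ j
        ≤ (Nat.descFactorial n j : ℝ) * ‖p.eval z‖ := hkey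
      _ = (Nat.descFactorial n j : ℝ) * ‖p.eval z‖ := rfl
  refine ⟨h1, le_trans h1 ?_⟩
  gcongr
  exact_mod_cast Nat.descFactorial_le_pow n j
end

section
/- For any monic polynomial p of degree n ≥ 2 whose zeros all lie in the closed disc of radius A ≥ 1, and any j ≥ 1, the maximum over the circle |z| = 2A of |d/dz (p^{(j)}(z)/p(z))| is at most j · n^j / A^{j+1}. -/
open Polynomial Finset


lemma deriv_prod_lin {m : ℕ} (α : Fin m → ℂ) (s : Finset (Fin m)) :
    derivative (∏ i ∈ s, (X - C (α i))) = ∑ i ∈ s, ∏ k ∈ s.erase i, (X - C (α k)) := by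
  induction s using Finset.induction_on with
  | empty => simp
  | @insert a s ha ih =>
    rw [Finset.prod_insert ha, derivative_mul, ih, Finset.sum_insert ha,
      Finset.erase_insert ha]
    simp only [derivative_sub, derivative_X, derivative_C, sub_zero, one_mul]
    rw [Finset.mul_sum]
    congr 1
    refine Finset.sum_congr rfl fun i hi => ?_
    rw [Finset.erase_insert_of_ne (by rintro rfl; exact ha hi), Finset.prod_insert
      (fun h => ha (Finset.mem_of_mem_erase h))]

lemma key_reindex {m j : ℕ} (f : Finset (Fin m) → Polynomial ℂ) :
    ∑ T ∈ powersetCard j (univ : Finset (Fin m)), ∑ i ∈ Tᶜ, f (insert i T)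
      = ∑ S ∈ powersetCard (j+1) (univ : Finset (Fin m)), ∑ i ∈ S, f S := by
  rw [Finset.sum_sigma', Finset.sum_sigma']
  refine Finset.sum_nbij' (fun x => ⟨insert x.2 x.1, x.2⟩) (fun x => ⟨x.1.erase x.2, x.2⟩)
    ?_ ?_ ?_ ?_ ?_
  · rintro ⟨T, i⟩ h
    simp only [Finset.mem_sigma, Finset.mem_powersetCard, Finset.mem_compl] at *
    refine ⟨⟨Finset.subset_univ _, ?_⟩, Finset.mem_insert_self _ _⟩
    rw [Finset.card_insert_of_notMem h.2, h.1.2]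
  · rintro ⟨S, i⟩ h
    simp only [Finset.mem_sigma, Finset.mem_powersetCard, Finset.mem_compl] at *
    refine ⟨⟨Finset.subset_univ _, ?_⟩, Finset.notMem_erase _ _⟩
    rw [Finset.card_erase_of_mem h.2, h.1.2]; rfl
  · rintro ⟨T, i⟩ h
    simp only [Finset.mem_sigma, Finset.mem_compl] at h
    simp [Finset.erase_insert h.2]
  · rintro ⟨S, i⟩ h
    simp only [Finset.mem_sigma] at h
    simp [Finset.insert_erase h.2]
  · rintro ⟨T, i⟩ h
    simp only [Finset.mem_sigma, Finset.mem_compl] at h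
    rfl

lemma iter_deriv_prod {m : ℕ} (α : Fin m → ℂ) (j : ℕ) :
    derivative^[j] (∏ i, (X - C (α i))) =
      (Nat.factorial j : ℂ) • ∑ T ∈ powersetCard j (univ : Finset (Fin m)),
        ∏ i ∈ Tᶜ, (X - C (α i)) := by
  induction j with
  | zero => simp
  | succ j ih =>
    rw [Function.iterate_succ_apply', ih, derivative_smul, derivative_sum]
    have hterm : ∀ T ∈ powersetCard j (univ : Finset (Fin m)),
        derivative (∏ i ∈ Tᶜ, (X - C (α i)))
          = ∑ i ∈ Tᶜ, ∏ k ∈ (insert i T)ᶜ, (X - C (α k)) := by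
      intro T _
      rw [deriv_prod_lin]
      refine Finset.sum_congr rfl fun i hi => ?_
      rw [Finset.compl_insert]
    rw [Finset.sum_congr rfl hterm, key_reindex fun S => ∏ k ∈ Sᶜ, (X - C (α k))]
    have h2 : ∀ S ∈ powersetCard (j+1) (univ : Finset (Fin m)),
        ∑ _i ∈ S, ∏ k ∈ Sᶜ, (X - C (α k))
          = ((j:ℂ)+1) • ∏ k ∈ Sᶜ, (X - C (α k)) := by
      intro S hS
      rw [Finset.sum_const, (Finset.mem_powersetCard.mp hS).2,
        ← Nat.cast_smul_eq_nsmul ℂ]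
      push_cast
      ring_nf
    rw [Finset.sum_congr rfl h2, ← Finset.smul_sum, smul_smul, Nat.factorial_succ]
    push_cast
    ring_nf

theorem stmt2 (p : Polynomial ℂ) (n : ℕ) (A : ℝ)
    (hmonic : p.Monic) (hdeg : p.natDegree = n) (hn : 2 ≤ n) (hA : 1 ≤ A)
    (hroots : ∀ α ∈ p.roots, ‖α‖ ≤ A)
    (j : ℕ) (hj : 1 ≤ j)
    (z : ℂ) (hz : ‖z‖ = 2 * A) :
    ‖deriv (fun w => (Polynomial.derivative^[j] p).eval w / p.eval w) z‖
      ≤ (j : ℝ) * (n : ℝ) ^ j / A ^ (j + 1) := by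
  have hA0 : (0:ℝ) < A := lt_of_lt_of_le one_pos hA
  have hsplits : p.Splits := IsAlgClosed.splits p
  have hcard : Multiset.card p.roots = n := by
    rw [← hdeg]; exact splits_iff_card_roots.mp hsplits
  set l := p.roots.toList with hl
  have hlen : l.length = n := by rw [hl, Multiset.length_toList, hcard]
  subst hlen
  set α : Fin l.length → ℂ := l.get with hα
  have hmem : ∀ i, α i ∈ p.roots := by
    intro i
    rw [← Multiset.mem_toList]
    exact List.get_mem _ _
  have hprod : p = ∏ i, (X - C (α i)) := by
    conv_lhs => rw [hsplits.eq_prod_roots_of_monic hmonic,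
      ← Multiset.coe_toList p.roots]
    rw [← hl, Multiset.map_coe, Multiset.prod_coe]
    conv_lhs => rw [← List.ofFn_get l, List.map_ofFn]
    rw [List.prod_ofFn]
    rfl
  -- distance bounds
  have hdist : ∀ i, A ≤ ‖z - α i‖ := by
    intro i
    have h1 : ‖α i‖ ≤ A := hroots _ (hmem i)
    calc A = 2 * A - A := by ring
    _ ≤ ‖z‖ - ‖α i‖ := by rw [hz]; linarith
    _ ≤ ‖z - α i‖ := by
        simpa using norm_sub_norm_le z (α i)
  have hnz : ∀ i, z - α i ≠ 0 := by
    intro i h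
    have := hdist i
    rw [h] at this
    simp at this
    linarith
  have hpz : p.eval z ≠ 0 := by
    rw [hprod, eval_prod]
    refine Finset.prod_ne_zero_iff.mpr fun i _ => ?_
    simpa using hnz i
  -- function F
  set F : ℂ → ℂ := fun w => (Nat.factorial j : ℂ) *
    ∑ T ∈ powersetCard j (univ : Finset (Fin l.length)), ∏ i ∈ T, (w - α i)⁻¹ with hF
  have hev : (fun w => (Polynomial.derivative^[j] p).eval w / p.eval w) =ᶠ[nhds z] F := by
    filter_upwards [p.continuous.continuousAt.eventually_ne hpz] with w hw
    have hfac : ∀ i : Fin l.length, w - α i ≠ 0 := by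
      intro i hzero
      apply hw
      rw [hprod, eval_prod]
      exact Finset.prod_eq_zero (Finset.mem_univ i) (by simp [← hzero])
    conv_lhs => rw [hprod, iter_deriv_prod]
    rw [eval_smul, eval_finset_sum, smul_eq_mul, hF]
    rw [mul_div_assoc, Finset.sum_div]
    congr 1
    refine Finset.sum_congr rfl fun T _ => ?_
    rw [eval_prod, eval_prod]
    simp only [eval_sub, eval_X, eval_C]
    rw [Finset.prod_inv_distrib, ← Finset.prod_mul_prod_compl T fun i => (w - α i),
      mul_comm, div_mul_eq_div_div, div_self (Finset.prod_ne_zero_iff.mpr fun i _ => hfac i),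
      one_div]
  set D : Finset (Fin l.length) → ℂ := fun T =>
    ∑ i ∈ T, (∏ k ∈ T.erase i, (z - α k)⁻¹) * (-1 / (z - α i)^2) with hD
  have hder : ∀ T ∈ powersetCard j (univ : Finset (Fin l.length)),
      HasDerivAt (fun w => ∏ i ∈ T, (w - α i)⁻¹) (D T) z := by
    intro T _
    have h := HasDerivAt.fun_finsetProd (u := T)
      (f := fun i w => (w - α i)⁻¹) (f' := fun i => -1 / (z - α i)^2)
      (fun i _ => by
        convert ((hasDerivAt_id z).sub_const (α i)).inv (hnz i) using 1 <;> simp [funext_iff])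
    simpa [hD, smul_eq_mul] using h
  have hFder : HasDerivAt F
      ((Nat.factorial j : ℂ) * ∑ T ∈ powersetCard j (univ : Finset (Fin l.length)), D T) z :=
    (HasDerivAt.fun_sum hder).const_mul _
  rw [hev.deriv_eq, hFder.deriv, norm_mul, Complex.norm_natCast]
  have hApow : (0:ℝ) < A ^ (j+1) := pow_pos hA0 _
  have hDT : ∀ T ∈ powersetCard j (univ : Finset (Fin l.length)),
      ‖D T‖ ≤ (j : ℝ) * (A ^ (j+1))⁻¹ := by
    intro T hT
    have hcardT : T.card = j := (Finset.mem_powersetCard.mp hT).2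
    have hterm : ∀ i ∈ T,
        ‖(∏ k ∈ T.erase i, (z - α k)⁻¹) * (-1 / (z - α i)^2)‖
          ≤ (A ^ (j+1))⁻¹ := by
      intro i hi
      rw [norm_mul, norm_prod]
      have h1 : ∏ k ∈ T.erase i, ‖(z - α k)⁻¹‖ ≤ A⁻¹ ^ (j - 1) := by
        calc ∏ k ∈ T.erase i, ‖(z - α k)⁻¹‖ ≤ ∏ _k ∈ T.erase i, A⁻¹ := by
              refine Finset.prod_le_prod (fun k _ => by positivity) fun k _ => ?_
              rw [norm_inv]
              exact inv_anti₀ hA0 (hdist k)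
          _ = A⁻¹ ^ (j - 1) := by
              rw [Finset.prod_const, Finset.card_erase_of_mem hi, hcardT]
      have h2 : ‖-1 / (z - α i)^2‖ ≤ A⁻¹ ^ 2 := by
        rw [norm_div, norm_pow]
        simp only [norm_neg, norm_one]
        rw [inv_pow, one_div]
        exact inv_anti₀ (by positivity) (pow_le_pow_left₀ hA0.le (hdist i) 2)
      calc (∏ k ∈ T.erase i, ‖(z - α k)⁻¹‖) * ‖-1 / (z - α i)^2‖
          ≤ A⁻¹ ^ (j - 1) * A⁻¹ ^ 2 := by
            refine mul_le_mul h1 h2 (by positivity) (by positivity)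
        _ = (A ^ (j+1))⁻¹ := by
            rw [← pow_add, ← inv_pow]
            congr 1
            omega
    calc ‖D T‖ ≤ ∑ i ∈ T,
          ‖(∏ k ∈ T.erase i, (z - α k)⁻¹) * (-1 / (z - α i)^2)‖ :=
        norm_sum_le _ _
      _ ≤ ∑ _i ∈ T, (A ^ (j+1))⁻¹ := Finset.sum_le_sum hterm
      _ = (j : ℝ) * (A ^ (j+1))⁻¹ := by
          rw [Finset.sum_const, hcardT, nsmul_eq_mul]
  have hsum : ‖∑ T ∈ powersetCard j (univ : Finset (Fin l.length)), D T‖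
      ≤ (l.length.choose j : ℝ) * ((j : ℝ) * (A ^ (j+1))⁻¹) := by
    calc ‖∑ T ∈ powersetCard j (univ : Finset (Fin l.length)), D T‖
        ≤ ∑ T ∈ powersetCard j (univ : Finset (Fin l.length)), ‖D T‖ :=
        norm_sum_le _ _
      _ ≤ ∑ _T ∈ powersetCard j (univ : Finset (Fin l.length)), (j : ℝ) * (A ^ (j+1))⁻¹ :=
        Finset.sum_le_sum hDT
      _ = (l.length.choose j : ℝ) * ((j : ℝ) * (A ^ (j+1))⁻¹) := by
        rw [Finset.sum_const, nsmul_eq_mul, Finset.card_powersetCard, Finset.card_univ,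
          Fintype.card_fin]
  calc (Nat.factorial j : ℝ) *
        ‖∑ T ∈ powersetCard j (univ : Finset (Fin l.length)), D T‖
      ≤ (Nat.factorial j : ℝ) * ((l.length.choose j : ℝ) * ((j : ℝ) * (A ^ (j+1))⁻¹)) := by
        exact mul_le_mul_of_nonneg_left hsum (by positivity)
    _ = ((l.length.descFactorial j : ℝ)) * (j : ℝ) * (A ^ (j+1))⁻¹ := by
        rw [Nat.descFactorial_eq_factorial_mul_choose]
        push_cast
        ring
    _ ≤ ((l.length : ℝ) ^ j) * (j : ℝ) * (A ^ (j+1))⁻¹ := by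
        have : (l.length.descFactorial j : ℝ) ≤ (l.length : ℝ) ^ j := by
          exact_mod_cast Nat.descFactorial_le_pow _ _
        exact mul_le_mul_of_nonneg_right (mul_le_mul_of_nonneg_right this (by positivity))
          (by positivity)
    _ = (j : ℝ) * (l.length : ℝ) ^ j / A ^ (j + 1) := by
        rw [div_eq_mul_inv]
        ring
end

section
/- For every j ≥ 1 there is a constant C'_j > 0 depending only on j such that for any monic polynomial p of degree n ≥ 2 with all zeros in the closed disc of radius A ≥ 1, the maximum over the circle |z| = 2A of |p^{(j)}(z)/p(z) − (p'(z)/p(z))^j| is at most C'_j · n^{j−1}/A^j. -/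
open Polynomial Finset

lemma sum_exchange {ι M : Type*} [DecidableEq ι] [AddCommMonoid M]
    (u : Finset ι) (j : ℕ) (F : Finset ι → M) :
    ∑ t ∈ u.powersetCard j, ∑ b ∈ u \ t, F (insert b t)
      = (j + 1) • ∑ t ∈ u.powersetCard (j + 1), F t := by
  have h1 : ∑ t ∈ u.powersetCard (j+1), (j+1) • F t
      = ∑ t ∈ u.powersetCard (j+1), ∑ _b ∈ t, F t := by
    refine Finset.sum_congr rfl fun t ht => ?_
    rw [Finset.sum_const, (Finset.mem_powersetCard.mp ht).2]
  rw [Finset.smul_sum, h1, Finset.sum_sigma', Finset.sum_sigma']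
  refine Finset.sum_nbij' (fun x => ⟨insert x.2 x.1, x.2⟩) (fun x => ⟨x.1.erase x.2, x.2⟩)
    ?_ ?_ ?_ ?_ (fun x _ => rfl)
  · rintro ⟨t, b⟩ hx
    rw [Finset.mem_sigma] at hx ⊢
    obtain ⟨ht, hb⟩ := hx
    rw [Finset.mem_powersetCard] at ht
    rw [Finset.mem_sdiff] at hb
    refine ⟨Finset.mem_powersetCard.mpr ⟨?_, ?_⟩, Finset.mem_insert_self _ _⟩
    · exact Finset.insert_subset hb.1 ht.1
    · rw [Finset.card_insert_of_notMem hb.2, ht.2]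
  · rintro ⟨t, b⟩ hx
    rw [Finset.mem_sigma] at hx ⊢
    obtain ⟨ht, hb⟩ := hx
    rw [Finset.mem_powersetCard] at ht
    refine ⟨Finset.mem_powersetCard.mpr ⟨(Finset.erase_subset _ _).trans ht.1, ?_⟩, ?_⟩
    · rw [Finset.card_erase_of_mem hb, ht.2]
      omega
    · exact Finset.mem_sdiff.mpr ⟨ht.1 hb, Finset.notMem_erase _ _⟩
  · rintro ⟨t, b⟩ hx
    rw [Finset.mem_sigma, Finset.mem_sdiff] at hx
    simp [Finset.erase_insert hx.2.2]
  · rintro ⟨t, b⟩ hx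
    rw [Finset.mem_sigma] at hx
    simp [Finset.insert_erase hx.2]

lemma deriv_fprod {ι : Type*} [DecidableEq ι] (f : ι → ℂ) (s : Finset ι) :
    derivative (∏ i ∈ s, (X - C (f i))) = ∑ b ∈ s, ∏ i ∈ s.erase b, (X - C (f i)) := by
  induction s using Finset.induction_on with
  | empty => simp
  | insert a s hb ih =>
    rw [Finset.prod_insert hb, derivative_mul, derivative_X_sub_C, one_mul, ih,
      Finset.sum_insert hb, Finset.erase_insert hb, Finset.mul_sum]
    congr 1
    refine Finset.sum_congr rfl fun b hbs => ?_
    rw [Finset.erase_insert_of_ne (by rintro rfl; exact hb hbs),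
      Finset.prod_insert (fun h => hb (Finset.erase_subset _ _ h))]

lemma deriv_prod {ι : Type*} [DecidableEq ι] (f : ι → ℂ) (u : Finset ι) (j : ℕ) :
    Polynomial.derivative^[j] (∏ i ∈ u, (X - C (f i)))
      = (j.factorial : ℂ[X]) * ∑ t ∈ u.powersetCard j, ∏ i ∈ u \ t, (X - C (f i)) := by
  induction j with
  | zero => simp
  | succ j ih =>
    rw [Function.iterate_succ_apply', ih, derivative_mul, Polynomial.derivative_natCast,
      zero_mul, zero_add, derivative_sum]
    have h : ∀ t ∈ u.powersetCard j, derivative (∏ i ∈ u \ t, (X - C (f i)))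
        = ∑ b ∈ u \ t, ∏ i ∈ u \ insert b t, (X - C (f i)) := by
      intro t _
      rw [deriv_fprod]
      refine Finset.sum_congr rfl fun b _ => ?_
      rw [Finset.sdiff_insert]
    rw [Finset.sum_congr rfl h,
      sum_exchange u j (fun t => ∏ i ∈ u \ t, (X - C (f i)))]
    rw [nsmul_eq_mul, Nat.factorial_succ]
    push_cast
    ring

lemma eval_ratio {ι : Type*} [DecidableEq ι] (f : ι → ℂ) (u : Finset ι) (j : ℕ) (z : ℂ)
    (hz : ∀ i ∈ u, z - f i ≠ 0) :
    (Polynomial.derivative^[j] (∏ i ∈ u, (X - C (f i)))).eval z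
        / (∏ i ∈ u, (X - C (f i))).eval z
      = (j.factorial : ℂ) * ∑ t ∈ u.powersetCard j, ∏ i ∈ t, (z - f i)⁻¹ := by
  rw [deriv_prod, eval_mul, eval_natCast, eval_finset_sum, mul_div_assoc, Finset.sum_div]
  congr 1
  refine Finset.sum_congr rfl fun t ht => ?_
  have hts : t ⊆ u := (Finset.mem_powersetCard.mp ht).1
  rw [eval_prod, eval_prod]
  simp only [eval_sub, eval_X, eval_C]
  rw [← Finset.prod_sdiff hts, div_mul_cancel_left₀, Finset.prod_inv_distrib]
  exact Finset.prod_ne_zero_iff.mpr fun i hi => hz i (Finset.mem_sdiff.mp hi).1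

lemma sym_bound {ι : Type*} [DecidableEq ι] (j : ℕ) (hj : 1 ≤ j) (u : Finset ι)
    (x : ι → ℂ) (B : ℝ) (hB : 0 ≤ B) (hx : ∀ i ∈ u, ‖x i‖ ≤ B) :
    ‖(∑ i ∈ u, x i) ^ j
        - (j.factorial : ℂ) * ∑ t ∈ u.powersetCard j, ∏ i ∈ t, x i‖
      ≤ (j : ℝ)^2 * (u.card : ℝ)^(j-1) * B^j := by
  have habs : ∀ t : Finset ι, t ⊆ u → ‖∏ i ∈ t, x i‖ ≤ B ^ t.card := by
    intro t hts
    rw [norm_prod, ← Finset.prod_const]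
    exact Finset.prod_le_prod (fun i _ => norm_nonneg _) (fun i hi => hx i (hts hi))
  have hw : ‖∑ i ∈ u, x i‖ ≤ (u.card : ℝ) * B := by
    calc ‖∑ i ∈ u, x i‖ ≤ ∑ i ∈ u, ‖x i‖ := norm_sum_le _ _
    _ ≤ ∑ _i ∈ u, B := Finset.sum_le_sum hx
    _ = (u.card : ℝ) * B := by rw [Finset.sum_const, nsmul_eq_mul]
  induction j, hj using Nat.le_induction with
  | base =>
    rw [Finset.powersetCard_one, Finset.sum_map]
    simp only [Function.Embedding.coeFn_mk, Finset.prod_singleton, pow_one,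
      Nat.factorial_one, Nat.cast_one, one_mul, sub_self, norm_zero]
    exact mul_nonneg (by positivity) hB
  | succ j hj ih =>
    set w := ∑ i ∈ u, x i with hwdef
    set Ej := ∑ t ∈ u.powersetCard j, ∏ i ∈ t, x i with hEjdef
    set Ej1 := ∑ t ∈ u.powersetCard (j+1), ∏ i ∈ t, x i with hEj1def
    set R := ∑ t ∈ u.powersetCard j, ∑ b ∈ t, x b * ∏ i ∈ t, x i with hRdef
    have key : w * Ej = ((j:ℂ)+1) * Ej1 + R := by
      have step1 : w * Ej = ∑ t ∈ u.powersetCard j, ∑ b ∈ u, x b * ∏ i ∈ t, x i := by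
        rw [hwdef, hEjdef, Finset.mul_sum]
        exact Finset.sum_congr rfl fun t _ => by rw [Finset.sum_mul]
      have step2 : ∀ t ∈ u.powersetCard j, ∑ b ∈ u, x b * ∏ i ∈ t, x i
          = (∑ b ∈ u \ t, ∏ i ∈ insert b t, x i) + ∑ b ∈ t, x b * ∏ i ∈ t, x i := by
        intro t ht
        have hts : t ⊆ u := (Finset.mem_powersetCard.mp ht).1
        rw [← Finset.sum_sdiff hts]
        congr 1
        refine Finset.sum_congr rfl fun b hb => ?_
        rw [Finset.prod_insert (Finset.mem_sdiff.mp hb).2]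
      rw [step1, Finset.sum_congr rfl step2, Finset.sum_add_distrib,
        sum_exchange u j (fun t => ∏ i ∈ t, x i), nsmul_eq_mul]
      push_cast
      rw [← hEj1def, ← hRdef]
    have hid : w^(j+1) - ((j+1).factorial : ℂ) * Ej1
        = w * (w^j - (j.factorial : ℂ) * Ej) + (j.factorial : ℂ) * R := by
      rw [Nat.factorial_succ]
      push_cast
      linear_combination ((j.factorial : ℂ)) * key
    have hRbound : ‖R‖ ≤ (u.card.choose j : ℝ) * ((j:ℝ) * (B * B^j)) := by
      calc ‖R‖ ≤ ∑ t ∈ u.powersetCard j, ‖∑ b ∈ t, x b * ∏ i ∈ t, x i‖ :=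
            norm_sum_le _ _
      _ ≤ ∑ t ∈ u.powersetCard j, ((j:ℝ) * (B * B^j)) := by
          refine Finset.sum_le_sum fun t ht => ?_
          obtain ⟨hts, hcard⟩ := Finset.mem_powersetCard.mp ht
          calc ‖∑ b ∈ t, x b * ∏ i ∈ t, x i‖
              ≤ ∑ b ∈ t, ‖x b * ∏ i ∈ t, x i‖ := norm_sum_le _ _
          _ ≤ ∑ _b ∈ t, (B * B^j) := by
              refine Finset.sum_le_sum fun b hb => ?_
              rw [norm_mul]
              have h1 := hx b (hts hb)
              have h2 := habs t hts
              rw [hcard] at h2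
              exact mul_le_mul h1 h2 (norm_nonneg _) hB
          _ = (j:ℝ) * (B * B^j) := by rw [Finset.sum_const, nsmul_eq_mul, hcard]
      _ = (u.card.choose j : ℝ) * ((j:ℝ) * (B * B^j)) := by
          rw [Finset.sum_const, nsmul_eq_mul, Finset.card_powersetCard]
    have hdesc : (j.factorial : ℝ) * (u.card.choose j : ℝ) ≤ (u.card : ℝ)^j := by
      have := Nat.descFactorial_le_pow u.card j
      rw [Nat.descFactorial_eq_factorial_mul_choose] at this
      exact_mod_cast this
    have hEjb : ‖w^j - (j.factorial : ℂ) * Ej‖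
        ≤ (j:ℝ)^2 * (u.card : ℝ)^(j-1) * B^j := ih
    have hBj : (0:ℝ) ≤ B^j := pow_nonneg hB j
    have hcardpow : ((u.card : ℝ))^(j-1) * (u.card : ℝ) = (u.card : ℝ)^j := by
      rw [← pow_succ]
      congr 1
      omega
    calc ‖w^(j+1) - ((j+1).factorial : ℂ) * Ej1‖
        = ‖w * (w^j - (j.factorial : ℂ) * Ej) + (j.factorial : ℂ) * R‖ := by
          rw [hid]
    _ ≤ ‖w * (w^j - (j.factorial : ℂ) * Ej)‖ + ‖(j.factorial : ℂ) * R‖ :=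
          norm_add_le _ _
    _ = ‖w‖ * ‖w^j - (j.factorial : ℂ) * Ej‖
          + (j.factorial : ℝ) * ‖R‖ := by
          rw [norm_mul, norm_mul, Complex.norm_natCast]
    _ ≤ ((u.card : ℝ) * B) * ((j:ℝ)^2 * (u.card : ℝ)^(j-1) * B^j)
          + (j.factorial : ℝ) * ((u.card.choose j : ℝ) * ((j:ℝ) * (B * B^j))) := by
          refine add_le_add (mul_le_mul hw hEjb (norm_nonneg _) ?_)
            (mul_le_mul_of_nonneg_left hRbound (by positivity))
          positivity
    _ ≤ ((j:ℝ)^2 + (j:ℝ)) * ((u.card : ℝ)^j * (B^(j+1))) := by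
          have h1 : ((u.card : ℝ) * B) * ((j:ℝ)^2 * (u.card : ℝ)^(j-1) * B^j)
              = (j:ℝ)^2 * ((u.card : ℝ)^j * B^(j+1)) := by
            rw [← hcardpow]; ring
          have h2 : (j.factorial : ℝ) * ((u.card.choose j : ℝ) * ((j:ℝ) * (B * B^j)))
              ≤ (j:ℝ) * ((u.card : ℝ)^j * B^(j+1)) := by
            have hb : (0:ℝ) ≤ (j:ℝ) * (B * B^j) := by positivity
            calc (j.factorial : ℝ) * ((u.card.choose j : ℝ) * ((j:ℝ) * (B * B^j)))
                = ((j.factorial : ℝ) * (u.card.choose j : ℝ)) * ((j:ℝ) * (B * B^j)) := by ring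
            _ ≤ (u.card : ℝ)^j * ((j:ℝ) * (B * B^j)) := mul_le_mul_of_nonneg_right hdesc hb
            _ = (j:ℝ) * ((u.card : ℝ)^j * B^(j+1)) := by ring
          calc _ ≤ (j:ℝ)^2 * ((u.card : ℝ)^j * B^(j+1)) + (j:ℝ) * ((u.card : ℝ)^j * B^(j+1)) :=
                by rw [h1]; exact add_le_add le_rfl h2
          _ = ((j:ℝ)^2 + (j:ℝ)) * ((u.card : ℝ)^j * B^(j+1)) := by ring
    _ ≤ (((j+1 : ℕ)) : ℝ)^2 * (u.card : ℝ)^((j+1)-1) * B^(j+1) := by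
          have h3 : ((j:ℝ)^2 + (j:ℝ)) ≤ ((j:ℝ)+1)^2 := by nlinarith [Nat.cast_nonneg (α := ℝ) j]
          have hn : (0:ℝ) ≤ (u.card : ℝ)^j * B^(j+1) := by positivity
          calc ((j:ℝ)^2 + (j:ℝ)) * ((u.card : ℝ)^j * B^(j+1))
              ≤ ((j:ℝ)+1)^2 * ((u.card : ℝ)^j * B^(j+1)) := mul_le_mul_of_nonneg_right h3 hn
          _ = (((j+1 : ℕ)) : ℝ)^2 * (u.card : ℝ)^((j+1)-1) * B^(j+1) := by
              push_cast [Nat.add_sub_cancel]; ring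

theorem stmt3 (j : ℕ) (hj : 1 ≤ j) :
    ∃ C : ℝ, 0 < C ∧
      ∀ (p : Polynomial ℂ) (n : ℕ) (A : ℝ),
        p.Monic → p.natDegree = n → 2 ≤ n → 1 ≤ A →
        (∀ α ∈ p.roots, ‖α‖ ≤ A) →
        ∀ z : ℂ, ‖z‖ = 2 * A →
          ‖(Polynomial.derivative^[j] p).eval z / p.eval z
              - ((Polynomial.derivative p).eval z / p.eval z) ^ j‖
            ≤ C * (n : ℝ) ^ (j - 1) / A ^ j := by
  refine ⟨(j:ℝ)^2, by positivity, ?_⟩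
  intro p n A hmon hdeg hn hA hroots z hz
  have hA0 : (0:ℝ) < A := lt_of_lt_of_le one_pos hA
  have hsplits : p.Splits := IsAlgClosed.splits p
  set l : List ℂ := p.roots.toList with hl
  have hlen : l.length = n := by
    rw [hl, Multiset.length_toList, (Polynomial.splits_iff_card_roots).mp hsplits, hdeg]
  have hmeml : ∀ a ∈ l, ‖a‖ ≤ A := by
    intro a ha
    exact hroots a ((Multiset.mem_toList).mp ha)
  set f : Fin l.length → ℂ := fun i => l[i.1] with hf
  have hp : ∏ i : Fin l.length, (X - C (f i)) = p := by
    rw [hf]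
    rw [Fin.prod_univ_fun_getElem l (fun a => X - C a)]
    conv_rhs => rw [hsplits.eq_prod_roots_of_monic hmon]
    rw [← Multiset.coe_toList p.roots, ← hl, Multiset.map_coe, Multiset.prod_coe]
  have hzi : ∀ i ∈ (Finset.univ : Finset (Fin l.length)), z - f i ≠ 0 := by
    intro i _
    have h1 : ‖f i‖ ≤ A := hmeml _ (List.getElem_mem _)
    have h2 : A ≤ ‖z - f i‖ := by
      have htri : ‖z‖ ≤ ‖z - f i‖ + ‖f i‖ := by
        simpa using norm_add_le (z - f i) (f i)
      rw [hz] at htri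
      linarith
    intro h0
    rw [h0, norm_zero] at h2
    linarith
  have hAinv : ∀ i ∈ (Finset.univ : Finset (Fin l.length)),
      ‖(z - f i)⁻¹‖ ≤ A⁻¹ := by
    intro i hi
    rw [norm_inv]
    have h1 : ‖f i‖ ≤ A := hmeml _ (List.getElem_mem _)
    have h2 : A ≤ ‖z - f i‖ := by
      have htri : ‖z‖ ≤ ‖z - f i‖ + ‖f i‖ := by
        simpa using norm_add_le (z - f i) (f i)
      rw [hz] at htri
      linarith
    exact inv_anti₀ hA0 h2
  have e1 : (Polynomial.derivative^[j] p).eval z / p.eval z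
      = (j.factorial : ℂ) * ∑ t ∈ (Finset.univ : Finset (Fin l.length)).powersetCard j,
          ∏ i ∈ t, (z - f i)⁻¹ := by
    rw [← hp]; exact eval_ratio f Finset.univ j z hzi
  have e2 : (Polynomial.derivative p).eval z / p.eval z
      = ∑ i : Fin l.length, (z - f i)⁻¹ := by
    have := eval_ratio f Finset.univ 1 z hzi
    rw [Function.iterate_one] at this
    rw [← hp, this, Finset.powersetCard_one, Finset.sum_map]
    simp
  rw [e1, e2]
  have hbound := sym_bound j hj (Finset.univ : Finset (Fin l.length))
    (fun i => (z - f i)⁻¹) A⁻¹ (by positivity) hAinv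
  rw [← norm_neg, neg_sub] at hbound
  have hcard : ((Finset.univ : Finset (Fin l.length)).card : ℝ) = (n:ℝ) := by
    rw [Finset.card_univ, Fintype.card_fin, hlen]
  calc ‖(j.factorial : ℂ) * ∑ t ∈ _, ∏ i ∈ t, (z - f i)⁻¹
          - (∑ i : Fin l.length, (z - f i)⁻¹) ^ j‖
      ≤ (j:ℝ)^2 * ((Finset.univ : Finset (Fin l.length)).card : ℝ)^(j-1) * (A⁻¹)^j := hbound
  _ = (j:ℝ)^2 * (n:ℝ)^(j-1) / A^j := by
      rw [hcard, inv_pow, div_eq_mul_inv]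
end

section
/- For every j ≥ 1 there exist a constant C''_j > 0 and an integer n(j) such that for every monic polynomial p of degree n ≥ n(j) with all zeros in the closed disc of radius A ≥ 1, the maximum over the circle |z| = 2A of |p^{(j)}(z)/p(z)| is at least C''_j · n^j / A^j. -/
open Polynomial

noncomputable def myrev (q : Polynomial ℂ) (m : ℕ) (c : ℂ) : Polynomial ℂ :=
  ∑ i ∈ Finset.range (m + 1), C (q.coeff i * c ^ i) * X ^ (m - i)

lemma myrev_eval_zero (q : Polynomial ℂ) (m : ℕ) (c : ℂ) :
    (myrev q m c).eval 0 = q.coeff m * c ^ m := by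
  rw [myrev, eval_finset_sum]
  rw [Finset.sum_eq_single m]
  · simp
  · intro i hi hne
    have : 0 < m - i := by
      simp only [Finset.mem_range] at hi
      omega
    simp [eval_mul, eval_pow, zero_pow this.ne']
  · intro h
    exact absurd (Finset.self_mem_range_succ m) h

lemma myrev_eval (q : Polynomial ℂ) (m : ℕ) (c : ℂ) (hm : q.natDegree < m + 1)
    (w : ℂ) (hw : w ≠ 0) :
    (myrev q m c).eval w = w ^ m * q.eval (c / w) := by
  rw [eval_eq_sum_range' hm, myrev, eval_finset_sum, Finset.mul_sum]
  refine Finset.sum_congr rfl fun i hi => ?_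
  simp only [Finset.mem_range] at hi
  have him : i ≤ m := by omega
  rw [eval_mul, eval_C, eval_pow, eval_X, div_pow, pow_sub₀ w hw him]
  field_simp

lemma desc_ge (j : ℕ) : ∀ n : ℕ, 2 * j ≤ n → ((n : ℝ) / 2) ^ j ≤ (n.descFactorial j : ℝ) := by
  induction j with
  | zero => intro n _; simp
  | succ k ih =>
    intro n hn
    rw [Nat.descFactorial_succ, pow_succ, Nat.cast_mul]
    have h1 : ((n : ℝ) / 2) ^ k ≤ (n.descFactorial k : ℝ) := ih n (by omega)
    have h2 : (n : ℝ) / 2 ≤ ((n - k : ℕ) : ℝ) := by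
      have h3 : (2 : ℝ) * (k + 1) ≤ n := by exact_mod_cast hn
      have : (k : ℝ) ≤ (n : ℝ) / 2 := by
        rw [le_div_iff₀ (by norm_num)]
        linarith
      rw [Nat.cast_sub (by omega)]
      linarith
    calc ((n : ℝ) / 2) ^ k * ((n : ℝ) / 2)
        ≤ (n.descFactorial k : ℝ) * ((n - k : ℕ) : ℝ) := by
          apply mul_le_mul h1 h2 (by positivity) (by positivity)
      _ = ((n - k : ℕ) : ℝ) * (n.descFactorial k : ℝ) := by ring

theorem stmt6 (j : ℕ) (hj : 1 ≤ j) :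
    ∃ C : ℝ, 0 < C ∧ ∃ N : ℕ,
      ∀ (p : Polynomial ℂ) (n : ℕ) (A : ℝ),
        p.Monic → p.natDegree = n → N ≤ n → 1 ≤ A →
        (∀ α ∈ p.roots, ‖α‖ ≤ A) →
        ∃ z : ℂ, ‖z‖ = 2 * A ∧
          C * (n : ℝ) ^ j / A ^ j
            ≤ ‖(Polynomial.derivative^[j] p).eval z / p.eval z‖ := by
  refine ⟨(4 : ℝ)⁻¹ ^ j, by positivity, 2 * j, ?_⟩
  intro p n A hmon hdeg hn hA hroots
  have hA0 : (0 : ℝ) < A := lt_of_lt_of_le one_pos hA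
  have hjn : j ≤ n := by omega
  have hp0 : p ≠ 0 := hmon.ne_zero
  have hcoe : p.coeff n = 1 := by rw [← hdeg]; exact hmon.coeff_natDegree
  set c : ℂ := ((2 * A : ℝ) : ℂ) with hc
  have hcabs : ‖c‖ = 2 * A := by
    rw [hc, Complex.norm_real, Real.norm_eq_abs, abs_of_pos (by linarith)]
  have hcne : c ≠ 0 := by
    intro h
    rw [h] at hcabs
    simp at hcabs
    linarith
  set Dj : Polynomial ℂ := derivative^[j] p with hDj
  have hDjdeg : Dj.natDegree < n - j + 1 := by
    have h1 : Dj.natDegree ≤ n - j := by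
      rw [hDj, ← hdeg]
      exact natDegree_iterate_derivative p j
    omega
  set P : Polynomial ℂ := myrev p n c with hP
  set Q : Polynomial ℂ := myrev Dj (n - j) c with hQ
  -- P is nonzero on closed unit ball
  have hPne : ∀ w ∈ Metric.closedBall (0 : ℂ) 1, P.eval w ≠ 0 := by
    intro w hw
    simp only [Metric.mem_closedBall, dist_zero_right] at hw
    rcases eq_or_ne w 0 with rfl | hw0
    · rw [hP, myrev_eval_zero, hcoe]
      simpa using pow_ne_zero n hcne
    · rw [hP, myrev_eval p n c (by omega) w hw0]
      refine mul_ne_zero (pow_ne_zero n hw0) ?_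
      intro hev
      have hmem : c / w ∈ p.roots := by
        rw [mem_roots hp0]
        exact hev
      have := hroots _ hmem
      rw [norm_div, hcabs] at this
      have hwabs : ‖w‖ ≤ 1 := by simpa using hw
      have hwpos : 0 < ‖w‖ := by
        simpa using hw0
      have h4 : 2 * A / ‖w‖ ≤ A := this
      have h5 : 2 * A ≤ 2 * A / ‖w‖ := by
        rw [le_div_iff₀ hwpos]
        nlinarith
      linarith
  set f : ℂ → ℂ := fun w => Q.eval w / P.eval w with hf
  have hdiffOn : DifferentiableOn ℂ f {w : ℂ | P.eval w ≠ 0} := by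
    apply DifferentiableOn.div
    · exact Q.differentiable.differentiableOn
    · exact P.differentiable.differentiableOn
    · intro x hx; exact hx
  have hsub : Metric.closedBall (0 : ℂ) 1 ⊆ {w : ℂ | P.eval w ≠ 0} := fun w hw => hPne w hw
  have hdcc : DiffContOnCl ℂ f (Metric.ball 0 1) := by
    apply DifferentiableOn.diffContOnCl
    rw [closure_ball (0 : ℂ) one_ne_zero]
    exact hdiffOn.mono hsub
  obtain ⟨w, hwfr, hmax⟩ := Complex.exists_mem_frontier_isMaxOn_norm
    Metric.isBounded_ball (Metric.nonempty_ball.2 one_pos) hdcc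
  rw [frontier_ball (0 : ℂ) one_ne_zero] at hwfr
  have hwabs : ‖w‖ = 1 := by
    simpa [Complex.dist_eq] using hwfr
  have hwne : w ≠ 0 := by
    intro h; rw [h] at hwabs; simp at hwabs
  have h0mem : (0 : ℂ) ∈ closure (Metric.ball (0 : ℂ) 1) := by
    rw [closure_ball (0 : ℂ) one_ne_zero]
    exact Metric.mem_closedBall_self (by norm_num)
  have hle : ‖f 0‖ ≤ ‖f w‖ := hmax h0mem
  -- compute f 0
  have hQ0 : Q.eval 0 = (n.descFactorial j : ℂ) * c ^ (n - j) := by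
    rw [hQ, myrev_eval_zero, hDj, coeff_iterate_derivative]
    have hnjj : n - j + j = n := by omega
    rw [hnjj, hcoe]
    simp [nsmul_eq_mul]
  have hP0 : P.eval 0 = c ^ n := by
    rw [hP, myrev_eval_zero, hcoe, one_mul]
  have hf0 : ‖f 0‖ = (n.descFactorial j : ℝ) / (2 * A) ^ j := by
    rw [hf]
    beta_reduce
    rw [hQ0, hP0, norm_div, norm_mul, norm_pow, norm_pow, hcabs]
    rw [Complex.norm_natCast]
    have h2A : (0 : ℝ) < 2 * A := by linarith
    rw [pow_sub₀ (2 * A) h2A.ne' hjn]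
    field_simp
  -- compute f w
  have hfw : ‖f w‖ = ‖Dj.eval (c / w) / p.eval (c / w)‖ := by
    rw [hf]
    beta_reduce
    rw [hQ, hP, myrev_eval Dj (n - j) c hDjdeg w hwne,
      myrev_eval p n c (by omega) w hwne]
    rw [norm_div, norm_div, norm_mul, norm_mul, norm_pow, norm_pow, hwabs]
    simp
  refine ⟨c / w, ?_, ?_⟩
  · rw [norm_div, hcabs, hwabs, div_one]
  · calc (4 : ℝ)⁻¹ ^ j * (n : ℝ) ^ j / A ^ j
        = ((n : ℝ) / (4 * A)) ^ j := by
          rw [div_pow, inv_pow, mul_pow]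
          ring
      _ = ((n : ℝ) / 2) ^ j / (2 * A) ^ j := by
          rw [← div_pow, div_div]
          congr 2
          ring
      _ ≤ (n.descFactorial j : ℝ) / (2 * A) ^ j := by
          gcongr
          exact desc_ge j n hn
      _ = ‖f 0‖ := hf0.symm
      _ ≤ ‖f w‖ := hle
      _ = ‖Dj.eval (c / w) / p.eval (c / w)‖ := hfw
end

section
/- For every j ≥ 1 there exist a constant C_j ≥ 1 and an integer n(j) such that for every monic polynomial p of degree n ≥ n(j) with all zeros in the closed disc of radius A ≥ 1, we have (1/C_j) · n^j/A^j ≤ max_{|z|=2A} |p^{(j)}(z)/p(z)| ≤ C_j · n^j/A^j. -/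
open Polynomial Multiset

lemma cons_sub_of_le' (a : ℂ) {s T : Multiset ℂ} (h : T ≤ s) :
    (a ::ₘ s) - T = a ::ₘ (s - T) := by
  rw [← singleton_add, ← singleton_add, add_comm {a} s, add_comm {a} (s-T),
    tsub_add_eq_add_tsub h]

lemma itadd : ∀ (j : ℕ) (p q : ℂ[X]),
    derivative^[j] (p + q) = derivative^[j] p + derivative^[j] q := by
  intro j
  induction j with
  | zero => simp
  | succ k ih => intro p q; simp [Function.iterate_succ_apply, derivative_add, ih]

lemma L1 (a : ℂ) : ∀ (j : ℕ) (q : ℂ[X]),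
    derivative^[j+1] ((X - C a) * q) =
      (X - C a) * derivative^[j+1] q + (j+1 : ℕ) • derivative^[j] q := by
  intro j
  induction j with
  | zero => intro q; simp [derivative_mul]; ring
  | succ k ih =>
      intro q
      have h1 : derivative ((X - C a) * q) = (X - C a) * derivative q + q := by
        simp [derivative_mul]; ring
      calc derivative^[k+1+1] ((X - C a) * q)
          = derivative^[k+1] (derivative ((X - C a) * q)) := by
            rw [Function.iterate_succ_apply]
        _ = derivative^[k+1] ((X - C a) * derivative q) + derivative^[k+1] q := by
            rw [h1, itadd]
        _ = (X - C a) * derivative^[k+1] (derivative q) + (k+1 : ℕ) • derivative^[k] (derivative q)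
              + derivative^[k+1] q := by rw [ih]
        _ = (X - C a) * derivative^[k+1+1] q + (k+1+1 : ℕ) • derivative^[k+1] q := by
            rw [← Function.iterate_succ_apply, ← Function.iterate_succ_apply, succ_nsmul]
            ring

lemma L2 : ∀ (M : Multiset ℂ) (j : ℕ),
    derivative^[j] ((M.map (fun a => X - C a)).prod)
      = (j.factorial : ℂ[X]) *
        ((M.powersetCard j).map (fun T => ((M - T).map (fun a => X - C a)).prod)).sum := by
  intro M
  induction M using Multiset.induction_on with
  | empty =>
      intro j
      rcases j with _ | k
      · simp
      · simp
  | cons a s ih =>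
      intro j
      rcases j with _ | k
      · simp
      · have hmapprod : ((a ::ₘ s).map (fun a => X - C a)).prod
            = (X - C a) * (s.map (fun a => X - C a)).prod := by
          rw [Multiset.map_cons, Multiset.prod_cons]
        rw [hmapprod, L1, ih, ih]
        rw [powersetCard_cons, Multiset.map_add, Multiset.sum_add]
        have h2 : ((s.powersetCard (k+1)).map
              (fun T => (((a ::ₘ s) - T).map (fun x => X - C x)).prod)).sum
            = (X - C a) * ((s.powersetCard (k+1)).map
              (fun T => ((s - T).map (fun x => X - C x)).prod)).sum := by
          rw [← Multiset.sum_map_mul_left]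
          apply congrArg
          apply Multiset.map_congr rfl
          intro T hT
          rw [cons_sub_of_le' a (mem_powersetCard.mp hT).1, Multiset.map_cons,
            Multiset.prod_cons]
        have h3 : (((s.powersetCard k).map (a ::ₘ ·)).map
              (fun T => (((a ::ₘ s) - T).map (fun x => X - C x)).prod)).sum
            = ((s.powersetCard k).map
              (fun T => ((s - T).map (fun x => X - C x)).prod)).sum := by
          rw [Multiset.map_map]
          apply congrArg
          apply Multiset.map_congr rfl
          intro T _
          simp only [Function.comp_apply]
          rw [sub_cons, erase_cons_head]
        rw [h2, h3, nsmul_eq_mul]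
        push_cast [Nat.factorial_succ]
        ring


noncomputable def Esum (k : ℕ) (U : Multiset ℂ) : ℂ :=
  ((U.powersetCard k).map Multiset.prod).sum

@[simp] lemma Esum_zero (U : Multiset ℂ) : Esum 0 U = 1 := by
  simp [Esum]

lemma Esum_cons (k : ℕ) (a : ℂ) (U : Multiset ℂ) :
    Esum (k+1) (a ::ₘ U) = Esum (k+1) U + a * Esum k U := by
  simp only [Esum, powersetCard_cons, Multiset.map_add, Multiset.sum_add, Multiset.map_map]
  congr 1
  simp only [Function.comp_apply, Multiset.prod_cons]
  rw [← Multiset.sum_map_mul_left]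

lemma erase_cons' {b : ℂ} (a : ℂ) {U : Multiset ℂ} (hb : b ∈ U) :
    (a ::ₘ U).erase b = a ::ₘ (U.erase b) := by
  by_cases h : b = a
  · subst h
    rw [erase_cons_head, cons_erase hb]
  · rw [erase_cons_tail]
    exact fun hh => h hh.symm

lemma I1 : ∀ (U : Multiset ℂ) (k : ℕ),
    ((k : ℂ) + 1) * Esum (k+1) U = (U.map (fun a => a * Esum k (U.erase a))).sum := by
  intro U
  induction U using Multiset.induction_on with
  | empty => intro k; simp [Esum, powersetCard_zero_right]
  | cons a U ih =>
      intro k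
      have hmc : ((a ::ₘ U).map (fun b => b * Esum k ((a ::ₘ U).erase b))).sum
          = a * Esum k U + (U.map (fun b => b * Esum k (a ::ₘ (U.erase b)))).sum := by
        rw [Multiset.map_cons, Multiset.sum_cons, erase_cons_head]
        congr 1
        apply congrArg
        apply Multiset.map_congr rfl
        intro b hb
        rw [erase_cons' a hb]
      rw [hmc]
      rcases k with _ | K
      · have e1 : ∀ V : Multiset ℂ, Esum 1 V = V.sum := fun V => by
          simp [Esum, powersetCard_one, Multiset.map_map, Function.comp]
        simp only [Esum_zero, mul_one, Nat.cast_zero, zero_add, one_mul, e1,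
          Multiset.sum_cons, Multiset.map_id']
      · have hrw : (U.map (fun b => b * Esum (K+1) (a ::ₘ U.erase b))).sum
            = (U.map (fun b => b * Esum (K+1) (U.erase b))).sum
              + a * (U.map (fun b => b * Esum K (U.erase b))).sum := by
          rw [← Multiset.sum_map_mul_left, ← Multiset.sum_map_add]
          apply congrArg
          apply Multiset.map_congr rfl
          intro b _
          rw [Esum_cons]
          ring
        rw [hrw, ← ih (K+1), ← ih K, Esum_cons]
        push_cast
        ring



lemma prod_abs_le {B : ℝ} (hB : 0 ≤ B) : ∀ (T : Multiset ℂ),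
    (∀ u ∈ T, ‖u‖ ≤ B) → ‖T.prod‖ ≤ B ^ T.card := by
  intro T
  induction T using Multiset.induction_on with
  | empty => intro _; simp
  | cons a T ih =>
      intro h
      rw [Multiset.prod_cons, norm_mul, Multiset.card_cons, pow_succ']
      exact mul_le_mul (h a (mem_cons_self a T)) (ih fun u hu => h u (mem_cons_of_mem hu))
        (norm_nonneg _) hB

lemma choose_le_pow' (m r : ℕ) : m.choose r ≤ m ^ r :=
  le_trans (Nat.le_mul_of_pos_left _ (Nat.factorial_pos r))
    (by rw [← Nat.descFactorial_eq_factorial_mul_choose]; exact Nat.descFactorial_le_pow m r)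

lemma Esum_abs_le (k : ℕ) (U : Multiset ℂ) {B : ℝ} (hB : 0 ≤ B)
    (h : ∀ u ∈ U, ‖u‖ ≤ B) :
    ‖Esum k U‖ ≤ (U.card.choose k : ℝ) * B ^ k := by
  have h1 : ‖Esum k U‖ ≤ (((U.powersetCard k).map Multiset.prod).map norm).sum := by
    rw [Esum]
    exact norm_multiset_sum_le _
  refine le_trans h1 ?_
  have h2 : ∀ x ∈ ((U.powersetCard k).map Multiset.prod).map norm, x ≤ B ^ k := by
    intro x hx
    rw [Multiset.map_map] at hx
    obtain ⟨T, hT, rfl⟩ := Multiset.mem_map.mp hx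
    obtain ⟨hTle, hTcard⟩ := mem_powersetCard.mp hT
    simp only [Function.comp_apply]
    rw [← hTcard]
    exact prod_abs_le hB T (fun u hu => h u (Multiset.mem_of_le hTle hu))
  have h3 := Multiset.sum_le_card_nsmul _ _ h2
  rwa [Multiset.card_map, Multiset.card_map, Multiset.card_powersetCard, nsmul_eq_mul] at h3

lemma re_sum_ge {b : ℝ} : ∀ (U : Multiset ℂ), (∀ u ∈ U, b ≤ u.re) →
    (U.card : ℝ) * b ≤ U.sum.re := by
  intro U
  induction U using Multiset.induction_on with
  | empty => intro _; simp
  | cons a U ih =>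
      intro h
      rw [Multiset.sum_cons, Complex.add_re, Multiset.card_cons]
      push_cast
      have := ih fun u hu => h u (mem_cons_of_mem hu)
      have := h a (mem_cons_self a U)
      nlinarith

@[simp] lemma Esum_zero' (U : Multiset ℂ) : Esum 0 U = 1 := by simp [Esum]

lemma Esum_one (U : Multiset ℂ) : Esum 1 U = U.sum := by
  simp [Esum, powersetCard_one, Multiset.map_map, Function.comp]

lemma abs_sum_map_le (U : Multiset ℂ) (f : ℂ → ℂ) (c : ℝ)
    (h : ∀ a ∈ U, ‖f a‖ ≤ c) :
    ‖(U.map f).sum‖ ≤ (U.card : ℝ) * c := by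
  have h1 : ‖(U.map f).sum‖ ≤ ((U.map f).map norm).sum := by
    exact norm_multiset_sum_le _
  refine le_trans h1 ?_
  have h2 : ∀ x ∈ (U.map f).map norm, x ≤ c := by
    intro x hx
    rw [Multiset.map_map] at hx
    obtain ⟨a, ha, rfl⟩ := Multiset.mem_map.mp hx
    simpa using h a ha
  have h3 := Multiset.sum_le_card_nsmul _ _ h2
  rwa [Multiset.card_map, Multiset.card_map, nsmul_eq_mul] at h3

lemma I2 (U : Multiset ℂ) (K' : ℕ) :
    ((K' : ℂ) + 1 + 1) * Esum (K' + 2) U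
      = U.sum * Esum (K' + 1) U - (U.map (fun a => a ^ 2 * Esum K' (U.erase a))).sum := by
  have h1 := I1 U (K' + 1)
  push_cast at h1
  rw [h1]
  have h2 : (U.map (fun a => a * Esum (K' + 1) (U.erase a))).sum
      = (U.map (fun a => a * Esum (K' + 1) U - a ^ 2 * Esum K' (U.erase a))).sum := by
    apply congrArg
    apply Multiset.map_congr rfl
    intro a ha
    have hc : Esum (K' + 1) U = Esum (K' + 1) (U.erase a) + a * Esum K' (U.erase a) := by
      conv_lhs => rw [← cons_erase ha, Esum_cons]
    rw [hc]; ring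
  rw [h2, Multiset.sum_map_sub, Multiset.sum_map_mul_right, Multiset.map_id']

lemma LB {b : ℝ} (hb : 0 < b) (n : ℕ) (U : Multiset ℂ) (hcard : U.card = n)
    (hre : ∀ u ∈ U, b ≤ u.re) (habs : ∀ u ∈ U, ‖u‖ ≤ 9 * b) :
    ∀ k : ℕ, 2 ^ (k + 2) * k.factorial * 9 ^ (k + 1) ≤ n →
      ((n : ℝ) * b) ^ k ≤ 2 ^ (k + 1) * (k.factorial : ℝ) * ‖Esum k U‖ := by
  have hS : (n : ℝ) * b ≤ ‖U.sum‖ := by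
    have h := re_sum_ge U hre
    rw [hcard] at h
    exact le_trans h (Complex.re_le_norm _)
  have hx : (0:ℝ) ≤ (n : ℝ) * b := by positivity
  intro k
  induction k with
  | zero => intro _; rw [Esum_zero]; simp
  | succ K ihK =>
    intro hn
    rcases K with _ | K'
    · rw [Esum_one]
      have h4 : (0:ℝ) ≤ ‖U.sum‖ := norm_nonneg _
      norm_num
      nlinarith
    · -- main case
      have hcond : 2 ^ (K' + 3) * (K' + 1).factorial * 9 ^ (K' + 2) ≤ n := by
        refine le_trans ?_ hn
        exact Nat.mul_le_mul (Nat.mul_le_mul (Nat.pow_le_pow_right (by norm_num) (by omega))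
          (Nat.factorial_le (by omega))) (Nat.pow_le_pow_right (by norm_num) (by omega))
      have hE1 : ((n : ℝ) * b) ^ (K' + 1)
          ≤ 2 ^ (K' + 2) * ((K' + 1).factorial : ℝ) * ‖Esum (K' + 1) U‖ :=
        ihK hcond
      have hcondR : (2:ℝ) ^ (K' + 3) * ((K' + 1).factorial : ℝ) * 9 ^ (K' + 2) ≤ (n:ℝ) := by
        exact_mod_cast hcond
      set x : ℝ := (n : ℝ) * b with hxdef
      set c : ℝ := 2 ^ (K' + 2) * ((K' + 1).factorial : ℝ) with hc
      set E2 := ‖Esum (K' + 1 + 1) U‖ with hE2def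
      set E1 := ‖Esum (K' + 1) U‖ with hE1def
      set S := ‖U.sum‖ with hSdef
      set R := ‖(U.map (fun a => a ^ 2 * Esum K' (U.erase a))).sum‖ with hRdef
      have hcpos : (0:ℝ) ≤ c := by rw [hc]; positivity
      have hE1c : x ^ (K' + 1) ≤ c * E1 := hE1
      have hBA : U.sum * Esum (K' + 1) U
          = ((K' : ℂ) + 1 + 1) * Esum (K' + 2) U
            + (U.map (fun a => a ^ 2 * Esum K' (U.erase a))).sum := by
        linear_combination - (I2 U K')
      have habsK : ‖(K' : ℂ) + 1 + 1‖ = (K' : ℝ) + 2 := by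
        have h1 : ((K' : ℂ) + 1 + 1) = ((K' + 2 : ℕ) : ℂ) := by push_cast; ring
        rw [h1, Complex.norm_natCast]; push_cast; ring
      have h3 : S * E1 ≤ ((K' : ℝ) + 2) * E2 + R := by
        rw [hSdef, hE1def, hE2def, hRdef]
        calc ‖U.sum‖ * ‖Esum (K' + 1) U‖
            = ‖U.sum * Esum (K' + 1) U‖ := (norm_mul _ _).symm
          _ = ‖((K' : ℂ) + 1 + 1) * Esum (K' + 2) U
                + (U.map (fun a => a ^ 2 * Esum K' (U.erase a))).sum‖ := by rw [hBA]
          _ ≤ ‖((K' : ℂ) + 1 + 1) * Esum (K' + 2) U‖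
                + ‖(U.map (fun a => a ^ 2 * Esum K' (U.erase a))).sum‖ :=
              norm_add_le _ _
          _ = ((K' : ℝ) + 2) * ‖Esum (K' + 2) U‖
                + ‖(U.map (fun a => a ^ 2 * Esum K' (U.erase a))).sum‖ := by
              rw [norm_mul, habsK]
      have h3' : c * (S * E1) ≤ c * (((K' : ℝ) + 2) * E2) + c * R := by
        rw [← mul_add]
        exact mul_le_mul_of_nonneg_left h3 hcpos
      have h7 : x ^ (K' + 2) ≤ c * (S * E1) := by
        calc x ^ (K' + 2) = x * x ^ (K' + 1) := by ring
          _ ≤ x * (c * E1) := mul_le_mul_of_nonneg_left hE1c hx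
          _ = c * (x * E1) := by ring
          _ ≤ c * (S * E1) := by
              refine mul_le_mul_of_nonneg_left ?_ hcpos
              exact mul_le_mul_of_nonneg_right hS (norm_nonneg _)
      have h9b : (0:ℝ) ≤ 9 * b := by positivity
      have hch : ((n - 1).choose K' : ℝ) ≤ (n : ℝ) ^ K' := by
        calc ((n - 1).choose K' : ℝ) ≤ (((n - 1) ^ K' : ℕ) : ℝ) := by
              exact_mod_cast choose_le_pow' (n - 1) K'
          _ ≤ (n : ℝ) ^ K' := by
              push_cast
              apply pow_le_pow_left₀ (by positivity)
              exact_mod_cast Nat.sub_le n 1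
      have hRb : R ≤ (9 * b) ^ (K' + 2) * (n : ℝ) ^ (K' + 1) := by
        rw [hRdef]
        have hterm : ∀ a ∈ U, ‖a ^ 2 * Esum K' (U.erase a)‖
            ≤ (9 * b) ^ 2 * (((n - 1).choose K' : ℝ) * (9 * b) ^ K') := by
          intro a ha
          rw [norm_mul, norm_pow]
          refine mul_le_mul (pow_le_pow_left₀ (norm_nonneg a) (habs a ha) 2) ?_
            (norm_nonneg _) (by positivity)
          have hE := Esum_abs_le K' (U.erase a) h9b
            (fun u hu => habs u (Multiset.mem_of_mem_erase hu))
          rwa [Multiset.card_erase_of_mem ha, hcard, Nat.pred_eq_sub_one] at hE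
        have h10 := abs_sum_map_le U _ _ hterm
        rw [hcard] at h10
        refine le_trans h10 ?_
        calc (n:ℝ) * ((9 * b) ^ 2 * (((n - 1).choose K' : ℝ) * (9 * b) ^ K'))
            ≤ (n:ℝ) * ((9 * b) ^ 2 * ((n:ℝ) ^ K' * (9 * b) ^ K')) := by
              refine mul_le_mul_of_nonneg_left ?_ (by positivity)
              refine mul_le_mul_of_nonneg_left ?_ (by positivity)
              exact mul_le_mul_of_nonneg_right hch (by positivity)
          _ = (9 * b) ^ (K' + 2) * (n : ℝ) ^ (K' + 1) := by ring
      have h6 : 2 * (c * R) ≤ x ^ (K' + 2) := by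
        calc 2 * (c * R) ≤ 2 * (c * ((9 * b) ^ (K' + 2) * (n : ℝ) ^ (K' + 1))) := by
              refine mul_le_mul_of_nonneg_left ?_ (by norm_num)
              exact mul_le_mul_of_nonneg_left hRb hcpos
          _ = (2 * c * 9 ^ (K' + 2)) * ((n:ℝ) ^ (K' + 1) * b ^ (K' + 2)) := by ring
          _ ≤ (n:ℝ) * ((n:ℝ) ^ (K' + 1) * b ^ (K' + 2)) := by
              refine mul_le_mul_of_nonneg_right ?_ (by positivity)
              calc 2 * c * 9 ^ (K' + 2)
                  = 2 ^ (K' + 3) * ((K' + 1).factorial : ℝ) * 9 ^ (K' + 2) := by rw [hc]; ring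
                _ ≤ (n:ℝ) := hcondR
          _ = x ^ (K' + 2) := by rw [hxdef]; ring
      have hgoal : (2:ℝ) ^ (K' + 1 + 1 + 1) * ((K' + 1 + 1).factorial : ℝ) * E2
          = 2 * (c * (((K' : ℝ) + 2) * E2)) := by
        rw [hc]; push_cast [Nat.factorial_succ]; ring
      have h8 : x ^ (K' + 1 + 1) = x ^ (K' + 2) := by ring
      rw [h8, hgoal]
      linarith

lemma prod_abs_ge {B : ℝ} (hB : 0 ≤ B) : ∀ (T : Multiset ℂ),
    (∀ u ∈ T, B ≤ ‖u‖) → B ^ T.card ≤ ‖T.prod‖ := by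
  intro T
  induction T using Multiset.induction_on with
  | empty => intro _; simp
  | cons a T ih =>
      intro h
      rw [Multiset.prod_cons, norm_mul, Multiset.card_cons, pow_succ']
      exact mul_le_mul (h a (mem_cons_self a T)) (ih fun u hu => h u (mem_cons_of_mem hu)) (by positivity)
        (norm_nonneg _)

lemma eval_prod_linear (z : ℂ) (T : Multiset ℂ) :
    ((T.map (fun a => X - C a)).prod).eval z = (T.map (fun a => z - a)).prod := by
  rw [eval_multiset_prod, Multiset.map_map]
  congr 1
  apply Multiset.map_congr rfl
  intro a _
  simp

lemma eval_iter_deriv (M : Multiset ℂ) (j : ℕ) (z : ℂ) (hz : ∀ a ∈ M, z - a ≠ 0) :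
    (derivative^[j] ((M.map (fun a => X - C a)).prod)).eval z
      = (j.factorial : ℂ) * (((M.map (fun a => X - C a)).prod).eval z
          * Esum j (M.map (fun a => (z - a)⁻¹))) := by
  rw [L2, eval_mul, eval_natCast]
  have hsum : (eval z) (((M.powersetCard j).map
        (fun T => ((M - T).map (fun a => X - C a)).prod)).sum)
      = ((M.powersetCard j).map
          (fun T => eval z ((M - T).map (fun a => X - C a)).prod)).sum := by
    simpa [Multiset.map_map] using map_multiset_sum (Polynomial.evalRingHom z)
      ((M.powersetCard j).map (fun T => ((M - T).map (fun a => X - C a)).prod))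
  rw [hsum]
  congr 1
  have hEs : Esum j (M.map (fun a => (z - a)⁻¹))
      = ((M.powersetCard j).map (fun T => (T.map (fun a => (z - a)⁻¹)).prod)).sum := by
    rw [Esum, powersetCard_map, Multiset.map_map]
    congr 1
  rw [hEs, eval_prod_linear, ← Multiset.sum_map_mul_left]
  apply congrArg
  apply Multiset.map_congr rfl
  intro T hT
  obtain ⟨hTle, _⟩ := mem_powersetCard.mp hT
  have hM : (M - T) + T = M := tsub_add_cancel_of_le hTle
  have hTprod_ne : ((T.map (fun a => z - a)).prod) ≠ 0 := by
    apply Multiset.prod_ne_zero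
    intro h0
    obtain ⟨a, ha, hza⟩ := Multiset.mem_map.mp h0
    exact hz a (Multiset.mem_of_le hTle ha) hza
  have hsplit : (M.map (fun a => z - a)).prod
      = ((M - T).map (fun a => z - a)).prod * (T.map (fun a => z - a)).prod := by
    rw [← hM, Multiset.map_add, Multiset.prod_add, hM]
  rw [eval_prod_linear, Multiset.prod_map_inv, hsplit]
  field_simp

theorem stmt7 (j : ℕ) (hj : 1 ≤ j) :
    ∃ C : ℝ, 1 ≤ C ∧ ∃ N : ℕ,
      ∀ (p : Polynomial ℂ) (n : ℕ) (A : ℝ),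
        p.Monic → p.natDegree = n → N ≤ n → 1 ≤ A →
        (∀ α ∈ p.roots, ‖α‖ ≤ A) →
        (∀ z : ℂ, ‖z‖ = 2 * A →
          ‖(Polynomial.derivative^[j] p).eval z / p.eval z‖
            ≤ C * (n : ℝ) ^ j / A ^ j) ∧
        (∃ z : ℂ, ‖z‖ = 2 * A ∧
          (1 / C) * (n : ℝ) ^ j / A ^ j
            ≤ ‖(Polynomial.derivative^[j] p).eval z / p.eval z‖) := by
  have hC1 : (1:ℝ) ≤ 2^(j+1) * 9^j := by
    have h1 : (1:ℝ) ≤ 2^(j+1) := one_le_pow₀ (by norm_num)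
    have h2 : (1:ℝ) ≤ 9^j := one_le_pow₀ (by norm_num)
    nlinarith
  refine ⟨2^(j+1) * 9^j, hC1, 2^(j+2) * j.factorial * 9^(j+1), ?_⟩
  intro p n A hmon hdeg hNn hA hroots
  have hA0 : (0:ℝ) < A := by linarith
  have hrc : p.roots.card = p.natDegree :=
    (Polynomial.splits_iff_card_roots).mp (IsAlgClosed.splits p)
  set M := p.roots with hM
  have hcard : M.card = n := by rw [hM, hrc, hdeg]
  have hpfac : (M.map (fun a => X - Polynomial.C a)).prod = p :=
    prod_multiset_X_sub_C_of_monic_of_roots_card_eq hmon hrc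
  have hmain : ∀ z : ℂ, ‖z‖ = 2*A →
      (∀ a ∈ M, A ≤ ‖z - a‖ ∧ z - a ≠ 0) ∧
      A^n ≤ ‖p.eval z‖ ∧ p.eval z ≠ 0 ∧
      (derivative^[j] p).eval z / p.eval z
        = (j.factorial : ℂ) * Esum j (M.map (fun a => (z - a)⁻¹)) := by
    intro z hz
    have hza : ∀ a ∈ M, A ≤ ‖z - a‖ := by
      intro a ha
      have h1 : ‖z‖ ≤ ‖z - a‖ + ‖a‖ := by
        calc ‖z‖ = ‖(z - a) + a‖ := by norm_num
          _ ≤ _ := norm_add_le _ _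
      have h2 := hroots a ha
      rw [hz] at h1
      linarith
    have hzne : ∀ a ∈ M, z - a ≠ 0 := by
      intro a ha h0
      have h3 := hza a ha
      rw [h0] at h3
      simp at h3
      linarith
    have hpz : p.eval z = (M.map (fun a => z - a)).prod := by
      rw [← hpfac, eval_prod_linear]
    have habsp : A^n ≤ ‖p.eval z‖ := by
      rw [hpz]
      have h4 := prod_abs_ge (le_of_lt hA0) (M.map (fun a => z - a)) ?_
      · rwa [Multiset.card_map, hcard] at h4
      · intro u hu
        obtain ⟨a, ha, rfl⟩ := Multiset.mem_map.mp hu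
        exact hza a ha
    have hne : p.eval z ≠ 0 := by
      intro h0
      rw [h0] at habsp
      simp at habsp
      nlinarith [pow_pos hA0 n]
    refine ⟨fun a ha => ⟨hza a ha, hzne a ha⟩, habsp, hne, ?_⟩
    have hd : (derivative^[j] p).eval z
        = (j.factorial : ℂ) * (p.eval z * Esum j (M.map (fun a => (z - a)⁻¹))) := by
      conv_lhs => rw [← hpfac]
      rw [eval_iter_deriv M j z hzne, hpfac]
    rw [hd]
    field_simp
  constructor
  · -- upper bound
    intro z hz
    obtain ⟨hza, habsp, hne, hid⟩ := hmain z hz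
    rw [hid, norm_mul, Complex.norm_natCast]
    set U := M.map (fun a => (z - a)⁻¹) with hU
    have hUcard : U.card = n := by rw [hU, Multiset.card_map, hcard]
    have hUb : ∀ u ∈ U, ‖u‖ ≤ A⁻¹ := by
      intro u hu
      obtain ⟨a, ha, rfl⟩ := Multiset.mem_map.mp hu
      rw [norm_inv]
      exact inv_anti₀ hA0 (hza a ha).1
    have hE := Esum_abs_le j U (by positivity) hUb
    rw [hUcard] at hE
    have hnat : (j.factorial * n.choose j : ℕ) ≤ n^j := by
      rw [← Nat.descFactorial_eq_factorial_mul_choose]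
      exact Nat.descFactorial_le_pow n j
    have hnat' : (j.factorial : ℝ) * (n.choose j : ℝ) ≤ (n:ℝ)^j := by exact_mod_cast hnat
    calc (j.factorial : ℝ) * ‖Esum j U‖
        ≤ (j.factorial : ℝ) * ((n.choose j : ℝ) * (A⁻¹)^j) :=
          mul_le_mul_of_nonneg_left hE (by positivity)
      _ = ((j.factorial : ℝ) * (n.choose j : ℝ)) * (A⁻¹)^j := by ring
      _ ≤ (n:ℝ)^j * (A⁻¹)^j := mul_le_mul_of_nonneg_right hnat' (by positivity)
      _ = (n:ℝ)^j / A^j := by rw [inv_pow, ← div_eq_mul_inv]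
      _ ≤ (2^(j+1) * 9^j) * ((n:ℝ)^j / A^j) := le_mul_of_one_le_left (by positivity) hC1
      _ = 2^(j+1) * 9^j * (n:ℝ)^j / A^j := by ring
  · -- lower bound
    have hzabs : ‖((2*A : ℝ) : ℂ)‖ = 2*A := by
      rw [Complex.norm_real, Real.norm_eq_abs, abs_of_pos (by linarith)]
    refine ⟨((2*A : ℝ) : ℂ), hzabs, ?_⟩
    obtain ⟨hza, habsp, hne, hid⟩ := hmain _ hzabs
    rw [hid, norm_mul, Complex.norm_natCast]
    set z : ℂ := ((2*A : ℝ) : ℂ) with hzdef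
    set U := M.map (fun a => (z - a)⁻¹) with hU
    have hUcard : U.card = n := by rw [hU, Multiset.card_map, hcard]
    have hb : (0:ℝ) < (9*A)⁻¹ := by positivity
    have hre : ∀ u ∈ U, (9*A)⁻¹ ≤ u.re := by
      intro u hu
      obtain ⟨a, ha, rfl⟩ := Multiset.mem_map.mp hu
      rw [Complex.inv_re]
      have h5 : (z - a).re = 2*A - a.re := by
        rw [Complex.sub_re, hzdef, Complex.ofReal_re]
      have h6 : a.re ≤ A := le_trans (Complex.re_le_norm a) (hroots a ha)
      have h7 : A ≤ (z - a).re := by rw [h5]; linarith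
      have h8 : Complex.normSq (z - a) ≤ 9*A^2 := by
        rw [Complex.normSq_eq_norm_sq]
        have h9 : ‖z - a‖ ≤ ‖z‖ + ‖a‖ := by
          simpa using norm_sub_le z a
        rw [hzabs] at h9
        have h10 := hroots a ha
        nlinarith [norm_nonneg (z - a)]
      have h11 : (0:ℝ) < Complex.normSq (z - a) :=
        Complex.normSq_pos.mpr ((hza a ha).2)
      have h12 : (9*A)⁻¹ = A / (9*A^2) := by field_simp
      rw [h12]
      exact div_le_div₀ (by linarith) h7 h11 h8
    have habs9 : ∀ u ∈ U, ‖u‖ ≤ 9 * (9*A)⁻¹ := by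
      intro u hu
      obtain ⟨a, ha, rfl⟩ := Multiset.mem_map.mp hu
      rw [norm_inv]
      have h13 : 9 * (9*A)⁻¹ = A⁻¹ := by field_simp
      rw [h13]
      exact inv_anti₀ hA0 (hza a ha).1
    have hE := LB hb n U hUcard hre habs9 j hNn
    have heq : ((n:ℝ) * (9*A)⁻¹)^j = (n:ℝ)^j / (9^j * A^j) := by
      rw [mul_pow, inv_pow, mul_pow, div_eq_mul_inv]
    have hE' : (n:ℝ)^j / (9^j * A^j) ≤ ((j.factorial : ℝ) * ‖Esum j U‖) * 2^(j+1) := by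
      calc (n:ℝ)^j / (9^j * A^j) = ((n:ℝ) * (9*A)⁻¹)^j := heq.symm
        _ ≤ 2^(j+1) * (j.factorial : ℝ) * ‖Esum j U‖ := hE
        _ = ((j.factorial : ℝ) * ‖Esum j U‖) * 2^(j+1) := by ring
    have hE'' : ((n:ℝ)^j / (9^j * A^j)) / 2^(j+1)
        ≤ (j.factorial : ℝ) * ‖Esum j U‖ :=
      (div_le_iff₀ (by positivity)).mpr hE'
    have hfin : 1 / (2^(j+1) * 9^j) * (n:ℝ)^j / A^j
        = ((n:ℝ)^j / (9^j * A^j)) / 2^(j+1) := by ring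
    linarith
end

section
/- Fix real numbers 0 < s < 1 and d > 0, an integer j ≥ 1, and a nonzero polynomial Q_j of degree m. There exist a positive integer n₀ and a constant K_j ≥ 1 such that for every n ≥ n₀ and every monic polynomial p of degree n whose zeros all lie in the disc of radius A = s·n^d, one has (1/K_j)·n^{d(m−j)+j}·s^{m−j} ≤ max_{|z|=2sn^d} |Q_j(z)·p^{(j)}(z)/p(z)| ≤ K_j·n^{d(m−j)+j}·s^{m−j}. -/
set_option maxHeartbeats 1000000

open Polynomial Real Metric

namespace Stmt9Aux

lemma eval_norm_le (q : Polynomial ℂ) {M : ℕ} (hq : q.natDegree ≤ M) {z : ℂ} {r : ℝ}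
    (h1 : 1 ≤ r) (hz : ‖z‖ ≤ r) :
    ‖q.eval z‖ ≤ (∑ k ∈ Finset.range (q.natDegree + 1), ‖q.coeff k‖) * r ^ M := by
  rw [Polynomial.eval_eq_sum_range]
  refine (norm_sum_le _ _).trans ?_
  rw [Finset.sum_mul]
  refine Finset.sum_le_sum fun k hk => ?_
  rw [norm_mul, norm_pow]
  have hk' : k ≤ M := le_trans (Nat.lt_succ_iff.mp (Finset.mem_range.mp hk)) hq
  have h0 : (0:ℝ) ≤ ‖q.coeff k‖ := norm_nonneg _
  have : ‖z‖ ^ k ≤ r ^ M :=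
    le_trans (pow_le_pow_left₀ (norm_nonneg z) hz k) (pow_le_pow_right₀ h1 hk')
  exact mul_le_mul_of_nonneg_left this h0

lemma prod_lower (t : Multiset ℂ) (z : ℂ) {A : ℝ} (hA : 0 ≤ A)
    (h : ∀ a ∈ t, A ≤ ‖z - a‖) :
    A ^ Multiset.card t ≤ ‖((t.map fun a => X - C a).prod).eval z‖ := by
  induction t using Multiset.induction with
  | empty => simp
  | cons a t ih =>
    simp only [Multiset.map_cons, Multiset.prod_cons, Multiset.card_cons, eval_mul, norm_mul,
      eval_sub, eval_X, eval_C, pow_succ]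
    have h1 : A ≤ ‖z - a‖ := h a (Multiset.mem_cons_self a t)
    have h2 := ih fun b hb => h b (Multiset.mem_cons_of_mem hb)
    have h3 : A ^ Multiset.card t * A ≤ ‖eval z (Multiset.map (fun a => X - C a) t).prod‖ * ‖z - a‖ :=
      mul_le_mul h2 h1 hA (norm_nonneg _)
    linarith [h3, mul_comm ‖z - a‖ ‖eval z (Multiset.map (fun a => X - C a) t).prod‖]


lemma iterate_derivative_multiset_sum (j : ℕ) (M : Multiset (Polynomial ℂ)) :
    derivative^[j] M.sum = (M.map (fun q => derivative^[j] q)).sum := by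
  simp_rw [← Module.End.pow_apply]
  exact map_multiset_sum _ _

lemma eval_multiset_sum' (M : Multiset (Polynomial ℂ)) (z : ℂ) :
    (M.sum).eval z = (M.map (fun q => q.eval z)).sum := by
  induction M using Multiset.induction with
  | empty => simp
  | cons a M ih => simp [ih]

lemma deriv_bound (z : ℂ) {A : ℝ} (hA : 0 < A) :
    ∀ (j : ℕ) (t : Multiset ℂ), (∀ a ∈ t, A ≤ ‖z - a‖) →
      ‖(derivative^[j] ((t.map fun a => X - C a).prod)).eval z‖ ≤
        (Multiset.card t : ℝ) ^ j / A ^ j * ‖((t.map fun a => X - C a).prod).eval z‖ := by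
  intro j
  induction j with
  | zero => intro t ht; simp
  | succ j ih =>
    intro t ht
    classical
    rcases eq_or_ne t 0 with rfl | htne0
    · simp [Function.iterate_succ_apply]
    have hcpos0 : 0 < Multiset.card t := Multiset.card_pos.mpr htne0
    have hc10 : (1:ℝ) ≤ (Multiset.card t : ℝ) := by exact_mod_cast hcpos0
    rw [Function.iterate_succ_apply, derivative_prod]
    simp only [derivative_sub, derivative_X, derivative_C, sub_zero, mul_one]
    rw [iterate_derivative_multiset_sum, Multiset.map_map, eval_multiset_sum', Multiset.map_map]
    refine le_trans (norm_multiset_sum_le _) ?_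
    rw [Multiset.map_map]
    set P := ((t.map fun a => X - C a).prod).eval z with hP
    set c : ℝ := ((Multiset.card t : ℝ) - 1) ^ j / A ^ j * (‖P‖ / A) with hc
    have key : ∀ i ∈ t, ‖Polynomial.eval z (derivative^[j]
          (((t.erase i).map fun a => X - C a).prod))‖ ≤ c := by
      intro i hi
      have htne : t ≠ 0 := fun h => by simp [h] at hi
      have hcpos : 0 < Multiset.card t := Multiset.card_pos.mpr htne
      have hc1 : (1:ℝ) ≤ (Multiset.card t : ℝ) := by exact_mod_cast hcpos
      have hmem : ∀ a ∈ t.erase i, A ≤ ‖z - a‖ := fun a ha =>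
        ht a (Multiset.mem_of_mem_erase ha)
      have h1 := ih (t.erase i) hmem
      have hcard : (Multiset.card (t.erase i) : ℝ) = (Multiset.card t : ℝ) - 1 := by
        rw [Multiset.card_erase_of_mem hi, Nat.pred_eq_sub_one, Nat.cast_sub hcpos]
        simp
      have herase : ‖(((t.erase i).map fun a => X - C a).prod).eval z‖ ≤ ‖P‖ / A := by
        have hsplit : (z - i) * (((t.erase i).map fun a => X - C a).prod).eval z = P := by
          rw [hP]
          conv_rhs => rw [← Multiset.cons_erase hi]
          simp [Multiset.map_cons, Multiset.prod_cons]
        rw [le_div_iff₀ hA]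
        have h2 : A * ‖(((t.erase i).map fun a => X - C a).prod).eval z‖ ≤
            ‖z - i‖ * ‖(((t.erase i).map fun a => X - C a).prod).eval z‖ :=
          mul_le_mul_of_nonneg_right (ht i hi) (norm_nonneg _)
        rw [← hsplit, norm_mul]
        linarith
      calc ‖Polynomial.eval z (derivative^[j] (((t.erase i).map fun a => X - C a).prod))‖
          ≤ (Multiset.card (t.erase i) : ℝ) ^ j / A ^ j *
            ‖(((t.erase i).map fun a => X - C a).prod).eval z‖ := h1
        _ ≤ c := by
            rw [hcard, hc]
            have h2 : (0:ℝ) ≤ ((Multiset.card t : ℝ) - 1) ^ j / A ^ j := by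
              apply div_nonneg _ (pow_nonneg hA.le _)
              exact pow_nonneg (by linarith) _
            exact mul_le_mul_of_nonneg_left herase h2
    have hsumle := Multiset.sum_le_card_nsmul
      (t.map fun i => ‖Polynomial.eval z (derivative^[j]
          (((t.erase i).map fun a => X - C a).prod))‖) c
      (by
        intro x hx
        rw [Multiset.mem_map] at hx
        obtain ⟨i, hi, rfl⟩ := hx
        exact key i hi)
    rw [Multiset.card_map] at hsumle
    refine le_trans hsumle ?_
    rw [nsmul_eq_mul, hc]
    have hct : (0:ℝ) ≤ (Multiset.card t : ℝ) := Nat.cast_nonneg _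
    have hle : ((Multiset.card t : ℝ) - 1) ^ j ≤ (Multiset.card t : ℝ) ^ j := by
      exact pow_le_pow_left₀ (by linarith) (by linarith) _
    have hAj : (0:ℝ) < A ^ j := pow_pos hA _
    have hPn : (0:ℝ) ≤ ‖P‖ := norm_nonneg _
    have expand : (Multiset.card t : ℝ) * (((Multiset.card t : ℝ) - 1) ^ j / A ^ j * (‖P‖ / A)) ≤
        (Multiset.card t : ℝ) * ((Multiset.card t : ℝ) ^ j / A ^ j * (‖P‖ / A)) := by
      apply mul_le_mul_of_nonneg_left _ hct
      apply mul_le_mul_of_nonneg_right _ (div_nonneg hPn hA.le)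
      exact by gcongr
    refine le_trans expand (le_of_eq ?_)
    rw [pow_succ, pow_succ]
    field_simp


lemma ratio_eq (SE R : ℝ) (hR : R ≠ 0) (ν : ℕ) (hν : 1 ≤ ν) :
    (SE * R^(ν-1)) / (R * (R/2)^ν) = SE * 2^ν / R^2 := by
  have hpow : R^ν = R^(ν-1) * R := by
    rw [← pow_succ]
    congr 1
    omega
  rw [div_pow, hpow]
  field_simp

lemma tends_aux {X c0 B : ℝ} (hB : 0 < B) (hc0 : 0 ≤ c0) (hX0 : 0 ≤ X)
    (key : ∀ R : ℝ, 2*B ≤ R → X ≤ c0 / R) : X = 0 := by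
  by_contra hne
  have hX : 0 < X := lt_of_le_of_ne hX0 (Ne.symm hne)
  have hR2B : 2*B ≤ max (2*B) (2*c0/X + 1) := le_max_left _ _
  have hR2 : 2*c0/X + 1 ≤ max (2*B) (2*c0/X + 1) := le_max_right _ _
  set R := max (2*B) (2*c0/X + 1) with hR
  have hRpos : 0 < R := by
    have : 0 ≤ 2*c0/X := div_nonneg (by linarith) hX.le
    linarith
  have hkey := key R hR2B
  have hlt : c0 / R < X := by
    rw [div_lt_iff₀ hRpos]
    have h1 : X * (2*c0/X + 1) = 2*c0 + X := by field_simp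
    nlinarith [mul_le_mul_of_nonneg_left hR2 hX.le]
  linarith

lemma contour (D N : Polynomial ℂ) (hD : D.Monic) {B : ℝ} (hB : 1 ≤ B)
    (hroots : ∀ α ∈ D.roots, ‖α‖ ≤ B) (hdeg : N.natDegree < D.natDegree) :
    (∮ z in C(0, 2*B), N.eval z / D.eval z) =
      (2 * π * Complex.I) * N.coeff (D.natDegree - 1) := by
  have hB0 : (0:ℝ) < B := lt_of_lt_of_le one_pos hB
  set ν := D.natDegree with hν
  have hν1 : 1 ≤ ν := Nat.one_le_iff_ne_zero.mpr (by omega)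
  have hsplits : Splits D := IsAlgClosed.splits D
  have hcard : Multiset.card D.roots = ν := (Polynomial.splits_iff_card_roots).mp hsplits
  have hDfac : D = (D.roots.map fun a => X - C a).prod :=
    hsplits.eq_prod_roots_of_monic hD
  have hDlow : ∀ z : ℂ, ∀ r : ℝ, B ≤ r → ‖z‖ = r → (r - B)^ν ≤ ‖D.eval z‖ := by
    intro z r hr hz
    have h2 : (r - B) ^ Multiset.card D.roots ≤
        ‖((D.roots.map fun a => X - C a).prod).eval z‖ := by
      refine prod_lower D.roots z (by linarith) ?_
      intro a ha
      have h3 := hroots a ha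
      have h4 : ‖z‖ - ‖a‖ ≤ ‖z - a‖ := norm_sub_norm_le z a
      linarith
    rw [hcard] at h2
    rwa [← hDfac] at h2
  have hDne : ∀ z : ℂ, B < ‖z‖ → D.eval z ≠ 0 := by
    intro z hz h0
    have h1 := hDlow z ‖z‖ hz.le rfl
    rw [h0, norm_zero] at h1
    have h2 : (0:ℝ) < (‖z‖ - B) ^ ν := pow_pos (by linarith) ν
    linarith
  have hdiff : ∀ z : ℂ, B < ‖z‖ → DifferentiableAt ℂ (fun w => N.eval w / D.eval w) z :=
    fun z hz => (N.differentiableAt).div (D.differentiableAt) (hDne z hz)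
  have hInd : ∀ R : ℝ, 2*B ≤ R →
      (∮ z in C(0, R), N.eval z / D.eval z) = ∮ z in C(0, 2*B), N.eval z / D.eval z := by
    intro R hR
    refine Complex.circleIntegral_eq_of_differentiable_on_annulus_off_countable (by linarith) hR
      Set.countable_empty ?_ ?_
    · intro z hz
      have hz2 : ¬ (‖z - 0‖ < 2*B) := fun h =>
        hz.2 (by simpa [Metric.mem_ball, dist_eq_norm] using h)
      rw [sub_zero] at hz2
      exact (hdiff z (by push_neg at hz2; linarith)).continuousAt.continuousWithinAt
    · intro z hz
      have hz2 : ¬ (‖z - 0‖ ≤ 2*B) := fun h =>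
        hz.1.2 (by simpa [Metric.mem_closedBall, dist_eq_norm] using h)
      rw [sub_zero] at hz2
      exact hdiff z (by push_neg at hz2; linarith)
  set a : ℂ := N.coeff (ν - 1) with ha
  set E : Polynomial ℂ := X * N - C a * D with hEdef
  have hNdeg : N.natDegree ≤ ν - 1 := by omega
  have hEdeg : E.natDegree ≤ ν - 1 := by
    rw [Polynomial.natDegree_le_iff_coeff_eq_zero]
    intro k hk
    have hk1 : ν ≤ k := by omega
    obtain ⟨k', rfl⟩ : ∃ k', k = k' + 1 := ⟨k - 1, by omega⟩
    rw [hEdef, Polynomial.coeff_sub, Polynomial.coeff_X_mul, Polynomial.coeff_C_mul]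
    rcases eq_or_lt_of_le hk1 with heq | hlt
    · have hDk : D.coeff (k' + 1) = 1 := by
        rw [← heq]
        exact hD.coeff_natDegree
      have hNk : N.coeff k' = a := by rw [ha]; congr 1; omega
      rw [hDk, hNk, mul_one, sub_self]
    · have hNk : N.coeff k' = 0 := Polynomial.coeff_eq_zero_of_natDegree_lt (by omega)
      have hDk : D.coeff (k' + 1) = 0 := Polynomial.coeff_eq_zero_of_natDegree_lt (by omega)
      rw [hNk, hDk, mul_zero, sub_zero]
  set SE : ℝ := ∑ k ∈ Finset.range (E.natDegree + 1), ‖E.coeff k‖ with hSE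
  have hSE0 : 0 ≤ SE := Finset.sum_nonneg fun _ _ => norm_nonneg _
  have key : ∀ R : ℝ, 2*B ≤ R →
      ‖(∮ z in C(0, 2*B), N.eval z / D.eval z) - (2*π*Complex.I) * a‖ ≤
        2*π*(SE * 2^ν) / R := by
    intro R hR
    have hR0 : (0:ℝ) < R := by linarith
    have hR1 : (1:ℝ) ≤ R := by linarith
    have hsphere : ∀ z : ℂ, z ∈ Metric.sphere (0:ℂ) R → ‖z‖ = R := by
      intro z hz
      simpa [Complex.dist_eq] using hz
    have hfc : ContinuousOn (fun z => N.eval z / D.eval z) (Metric.sphere (0:ℂ) R) := by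
      intro z hz
      exact (hdiff z (by rw [hsphere z hz]; linarith)).continuousAt.continuousWithinAt
    have hf1 : CircleIntegrable (fun z => N.eval z / D.eval z) 0 R :=
      hfc.circleIntegrable hR0.le
    have hgc : ContinuousOn (fun z : ℂ => a * z⁻¹) (Metric.sphere (0:ℂ) R) := by
      intro z hz
      have hzne : z ≠ 0 := by
        intro h0; rw [h0] at hz; have := hsphere 0 hz; simp at this; linarith
      have hd : DifferentiableAt ℂ (fun w : ℂ => a * w⁻¹) z :=
        (differentiableAt_const a).mul (differentiableAt_id.inv hzne)
      exact hd.continuousAt.continuousWithinAt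
    have hg1 : CircleIntegrable (fun z : ℂ => a * z⁻¹) 0 R := hgc.circleIntegrable hR0.le
    have hg : (∮ z in C(0,R), a * z⁻¹) = (2*π*Complex.I) * a := by
      have h0 : (0:ℂ) ∈ Metric.ball (0:ℂ) R := by simpa using hR0
      have h1 := circleIntegral.integral_sub_inv_of_mem_ball h0
      have hfeq : (fun z : ℂ => a * z⁻¹) = fun z : ℂ => a • (z - 0)⁻¹ := by
        funext w
        simp [smul_eq_mul]
      have h2 : (∮ z in C(0,R), a * z⁻¹) = a • ∮ z in C(0,R), (z - 0)⁻¹ := by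
        rw [hfeq]
        exact circleIntegral.integral_smul a (fun z : ℂ => (z - 0)⁻¹) 0 R
      rw [h2, h1, smul_eq_mul]
      ring
    have hbound : ∀ z ∈ Metric.sphere (0:ℂ) R,
        ‖N.eval z / D.eval z - a * z⁻¹‖ ≤ (SE * 2^ν)/R^2 := by
      intro z hz
      have hzR : ‖z‖ = R := hsphere z hz
      have hzne : z ≠ 0 := by
        intro h0; rw [h0, norm_zero] at hzR; linarith
      have hDz : D.eval z ≠ 0 := hDne z (by rw [hzR]; linarith)
      have heq : N.eval z / D.eval z - a * z⁻¹ = E.eval z / (z * D.eval z) := by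
        rw [hEdef]
        simp only [eval_sub, eval_mul, eval_X, eval_C]
        field_simp
      rw [heq, norm_div, norm_mul]
      have hE : ‖E.eval z‖ ≤ SE * R^(ν-1) := eval_norm_le E hEdeg hR1 (le_of_eq hzR)
      have hDlow2 : (R/2)^ν ≤ ‖D.eval z‖ := by
        refine le_trans ?_ (hDlow z R (by linarith) hzR)
        exact pow_le_pow_left₀ (by linarith) (by linarith) _
      have hDpos : (0:ℝ) < ‖D.eval z‖ := lt_of_lt_of_le (pow_pos (by linarith) ν) hDlow2
      rw [hzR]
      have hmain : ‖E.eval z‖ / (R * ‖D.eval z‖) ≤ (SE * R^(ν-1)) / (R * (R/2)^ν) :=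
        div_le_div₀ (by positivity) hE (by positivity)
          (mul_le_mul_of_nonneg_left hDlow2 hR0.le)
      exact le_trans hmain (le_of_eq (ratio_eq SE R (ne_of_gt hR0) ν hν1))
    have hnorm := circleIntegral.norm_integral_le_of_norm_le_const hR0.le hbound
    have hsub := circleIntegral.integral_sub hf1 hg1
    rw [hsub, hg, hInd R hR] at hnorm
    calc ‖(∮ z in C(0, 2*B), N.eval z / D.eval z) - (2*π*Complex.I) * a‖
        ≤ 2 * π * R * ((SE * 2^ν)/R^2) := hnorm
      _ = 2*π*(SE * 2^ν) / R := by field_simp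
  have hzero : ‖(∮ z in C(0, 2*B), N.eval z / D.eval z) - (2*π*Complex.I) * a‖ = 0 := by
    refine tends_aux hB0 (c0 := 2*π*(SE * 2^ν)) (by positivity) (norm_nonneg _) ?_
    intro R hR
    exact key R hR
  rw [sub_eq_zero.mp (norm_eq_zero.mp hzero)]


lemma descFac_lower : ∀ (j : ℕ) (n : ℕ), 2*j ≤ n → (n:ℝ)^j ≤ 2^j * (n.descFactorial j : ℝ) := by
  intro j
  induction j with
  | zero => intro n h; simp
  | succ j ih =>
    intro n h
    rw [Nat.descFactorial_succ]
    have h1 := ih n (by omega)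
    have hjn : j ≤ n := by omega
    have hcast : ((n - j : ℕ) : ℝ) = (n:ℝ) - j := by
      rw [Nat.cast_sub hjn]
    have h2 : (n:ℝ) ≤ 2*((n:ℝ) - (j:ℝ)) := by
      have : ((2*(j+1) : ℕ) : ℝ) ≤ (n:ℝ) := by exact_mod_cast h
      push_cast at this
      linarith
    have hd0 : (0:ℝ) ≤ (n.descFactorial j : ℝ) := Nat.cast_nonneg _
    have hn0 : (0:ℝ) ≤ (n:ℝ) := Nat.cast_nonneg _
    calc (n:ℝ)^(j+1) = (n:ℝ) * (n:ℝ)^j := by ring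
      _ ≤ (2*((n:ℝ) - (j:ℝ))) * (2^j * (n.descFactorial j : ℝ)) := by
          apply mul_le_mul h2 h1 (by positivity) (by linarith)
      _ = 2^(j+1) * (((n:ℝ) - (j:ℝ)) * (n.descFactorial j : ℝ)) := by ring
      _ = 2^(j+1) * (((n - j) * n.descFactorial j : ℕ) : ℝ) := by
          push_cast [Nat.cast_sub hjn]
          ring

end Stmt9Aux
open Stmt9Aux

theorem stmt9 (s d : ℝ) (hs0 : 0 < s) (hs1 : s < 1) (hd : 0 < d)
    (j : ℕ) (hj : 1 ≤ j) (Q : Polynomial ℂ) (hQ : Q ≠ 0) (m : ℕ) (hm : Q.natDegree = m) :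
    ∃ n₀ : ℕ, 0 < n₀ ∧ ∃ K : ℝ, 1 ≤ K ∧
      ∀ n : ℕ, n₀ ≤ n →
        ∀ p : Polynomial ℂ, p.Monic → p.natDegree = n →
          (∀ α ∈ p.roots, ‖α‖ ≤ s * (n : ℝ) ^ d) →
          (∀ z : ℂ, ‖z‖ = 2 * s * (n : ℝ) ^ d →
            ‖Q.eval z * ((Polynomial.derivative^[j] p).eval z / p.eval z)‖
              ≤ K * (n : ℝ) ^ (d * ((m : ℝ) - j) + j) * s ^ ((m : ℝ) - j)) ∧
          (∃ z : ℂ, ‖z‖ = 2 * s * (n : ℝ) ^ d ∧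
            (1 / K) * (n : ℝ) ^ (d * ((m : ℝ) - j) + j) * s ^ ((m : ℝ) - j)
              ≤ ‖Q.eval z * ((Polynomial.derivative^[j] p).eval z / p.eval z)‖) := by
  classical
  set qm : ℝ := ‖Q.leadingCoeff‖ with hqmdef
  have hqm : 0 < qm := norm_pos_iff.mpr (Polynomial.leadingCoeff_ne_zero.mpr hQ)
  set SQ : ℝ := ∑ k ∈ Finset.range (Q.natDegree + 1), ‖Q.coeff k‖ with hSQdef
  have hSQ0 : 0 ≤ SQ := Finset.sum_nonneg fun _ _ => norm_nonneg _
  set K : ℝ := max 1 (max (SQ * 2^m) (2^(2*j+1) / (qm * 2^m))) with hKdef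
  have hK1 : (1:ℝ) ≤ K := le_max_left _ _
  have hK0 : (0:ℝ) < K := lt_of_lt_of_le one_pos hK1
  have hKa : SQ * 2^m ≤ K := le_trans (le_max_left _ _) (le_max_right _ _)
  have hKb : 2^(2*j+1) / (qm * 2^m) ≤ K := le_trans (le_max_right _ _) (le_max_right _ _)
  have hKinv : 1/K ≤ qm * 2^m / 2^(2*j+1) := by
    have hb0 : (0:ℝ) < 2^(2*j+1) / (qm * 2^m) := by positivity
    have := one_div_le_one_div_of_le hb0 hKb
    rwa [one_div_div] at this
  refine ⟨max (2*j+1) (⌈(1/s)^(d⁻¹)⌉₊ + 1), by positivity, K, hK1, ?_⟩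
  intro n hn p hmono hdeg hroots
  have hn2j : 2*j ≤ n := by
    have := le_trans (le_max_left (2*j+1) (⌈(1/s)^(d⁻¹)⌉₊ + 1)) hn
    omega
  have hjn : j ≤ n := by omega
  have hn1 : 1 ≤ n := by omega
  have hnR : (1:ℝ) ≤ (n:ℝ) := by exact_mod_cast hn1
  have hnpos : (0:ℝ) < (n:ℝ) := by linarith
  set A : ℝ := s * (n:ℝ)^d with hA
  have hnd_pos : (0:ℝ) < (n:ℝ)^d := Real.rpow_pos_of_pos hnpos d
  have hA0 : 0 < A := mul_pos hs0 hnd_pos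
  have hA1 : 1 ≤ A := by
    have hceil : ((1/s)^(d⁻¹) : ℝ) ≤ ((⌈(1/s)^(d⁻¹)⌉₊ + 1 : ℕ) : ℝ) := by
      push_cast
      have := Nat.le_ceil ((1/s : ℝ)^(d⁻¹))
      linarith
    have hcn : ((⌈(1/s)^(d⁻¹)⌉₊ + 1 : ℕ) : ℝ) ≤ (n:ℝ) := by
      exact_mod_cast le_trans (le_max_right (2*j+1) _) hn
    have h1 : ((1/s : ℝ))^(d⁻¹) ≤ (n:ℝ) := le_trans hceil hcn
    have h2 : (((1/s : ℝ))^(d⁻¹))^d ≤ (n:ℝ)^d :=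
      Real.rpow_le_rpow (Real.rpow_nonneg (by positivity) _) h1 hd.le
    rw [← Real.rpow_mul (by positivity), inv_mul_cancel₀ hd.ne', Real.rpow_one] at h2
    calc (1:ℝ) = s * (1/s) := by field_simp
      _ ≤ s * (n:ℝ)^d := by
          apply mul_le_mul_of_nonneg_left h2 hs0.le
  have hsplits : Splits p := IsAlgClosed.splits p
  have hcard : Multiset.card p.roots = n := by
    rw [← hdeg]
    exact (Polynomial.splits_iff_card_roots).mp hsplits
  have hpfac : p = (p.roots.map fun a => X - C a).prod :=
    hsplits.eq_prod_roots_of_monic hmono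
  have hproots : ∀ a ∈ p.roots, ‖a‖ ≤ A := by
    intro a ha
    exact hroots a ha
  have hpne0 : p ≠ 0 := hmono.ne_zero
  have hcircle : ∀ z : ℂ, ‖z‖ = 2*s*(n:ℝ)^d →
      ‖z‖ = 2*A ∧ (∀ a ∈ p.roots, A ≤ ‖z - a‖) ∧ A^n ≤ ‖p.eval z‖ ∧ p.eval z ≠ 0 := by
    intro z hz
    have hz' : ‖z‖ = 2*A := by
      rw [hz, hA]; ring
    have hza : ∀ a ∈ p.roots, A ≤ ‖z - a‖ := by
      intro a ha
      have h1 := norm_sub_norm_le z a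
      have h2 := hproots a ha
      rw [hz'] at h1
      linarith
    have hplow : A^n ≤ ‖p.eval z‖ := by
      have h3 := prod_lower p.roots z hA0.le hza
      rw [hcard, ← hpfac] at h3
      exact h3
    have hpne : p.eval z ≠ 0 := by
      intro h0
      rw [h0, norm_zero] at hplow
      nlinarith [pow_pos hA0 n]
    exact ⟨hz', hza, hplow, hpne⟩
  -- facts about the iterated derivative
  have hdpcoeff : (derivative^[j] p).coeff (n - j) = (n.descFactorial j : ℂ) := by
    rw [Polynomial.coeff_iterate_derivative]
    have he : n - j + j = n := by omega
    rw [he]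
    have : p.coeff n = 1 := by
      have := hmono.coeff_natDegree
      rwa [hdeg] at this
    rw [this]
    simp
  have hdFnat : n.descFactorial j ≠ 0 := by
    intro h
    exact absurd (Nat.descFactorial_eq_zero_iff_lt.mp h) (not_lt.mpr hjn)
  have hdF0 : (0:ℝ) < (n.descFactorial j : ℝ) := by
    exact_mod_cast Nat.pos_of_ne_zero hdFnat
  have hdpcoeff_ne : (derivative^[j] p).coeff (n - j) ≠ 0 := by
    rw [hdpcoeff]
    exact_mod_cast hdFnat
  have hdpne : derivative^[j] p ≠ 0 := fun h => by
    rw [h] at hdpcoeff_ne; simp at hdpcoeff_ne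
  have hdpdeg : (derivative^[j] p).natDegree = n - j := by
    refine le_antisymm ?_ (le_natDegree_of_ne_zero hdpcoeff_ne)
    have := Polynomial.natDegree_iterate_derivative p j
    rwa [hdeg] at this
  have hdplead : (derivative^[j] p).leadingCoeff = (n.descFactorial j : ℂ) := by
    rw [Polynomial.leadingCoeff, hdpdeg, hdpcoeff]
  -- key rpow identity
  have hkey : A ^ ((m:ℝ)-(j:ℝ)) * (n:ℝ)^((j:ℕ):ℝ) =
      (n:ℝ)^(d*((m:ℝ)-j)+j) * s^((m:ℝ)-j) := by
    rw [hA, Real.mul_rpow hs0.le hnd_pos.le,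
      ← Real.rpow_mul hnpos.le, Real.rpow_add hnpos]
    ring
  constructor
  · -- upper bound
    intro z hz
    obtain ⟨hz', hza, hplow, hpne⟩ := hcircle z hz
    have hppos : 0 < ‖p.eval z‖ := lt_of_lt_of_le (pow_pos hA0 n) hplow
    have hQz : ‖Q.eval z‖ ≤ SQ * (2*A)^m :=
      eval_norm_le Q hm.le (by linarith) (le_of_eq hz')
    have hdpz : ‖(derivative^[j] p).eval z‖ ≤ (n:ℝ)^j / A^j * ‖p.eval z‖ := by
      have h2 := deriv_bound z hA0 j p.roots hza
      rw [hcard, ← hpfac] at h2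
      exact h2
    have hratio : ‖(derivative^[j] p).eval z‖ / ‖p.eval z‖ ≤ (n:ℝ)^j / A^j := by
      rw [div_le_iff₀ hppos]
      exact hdpz
    rw [norm_mul, norm_div]
    have hmain : ‖Q.eval z‖ * (‖(derivative^[j] p).eval z‖ / ‖p.eval z‖) ≤
        (SQ * (2*A)^m) * ((n:ℝ)^j / A^j) :=
      mul_le_mul hQz hratio (div_nonneg (norm_nonneg _) (norm_nonneg _))
        (mul_nonneg hSQ0 (pow_nonneg (by linarith) m))
    refine le_trans hmain ?_
    have heq : SQ * (2*A)^m * ((n:ℝ)^j / A^j) =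
        (SQ * 2^m) * (A ^ ((m:ℝ)-(j:ℝ)) * (n:ℝ)^((j:ℕ):ℝ)) := by
      rw [Real.rpow_sub hA0, Real.rpow_natCast, Real.rpow_natCast, Real.rpow_natCast, mul_pow]
      field_simp
    rw [heq, hkey]
    calc (SQ * 2^m) * ((n:ℝ)^(d*((m:ℝ)-j)+j) * s^((m:ℝ)-j)) ≤
        K * ((n:ℝ)^(d*((m:ℝ)-j)+j) * s^((m:ℝ)-j)) := by
          apply mul_le_mul_of_nonneg_right hKa
          positivity
      _ = K * (n:ℝ)^(d*((m:ℝ)-j)+j) * s^((m:ℝ)-j) := by ring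
  · -- lower bound
    set D : Polynomial ℂ := X^m * p with hDdef
    set Nn : Polynomial ℂ := Q * X^(j-1) * (derivative^[j] p) with hNdef
    have hXm : (X : Polynomial ℂ)^m ≠ 0 := pow_ne_zero _ X_ne_zero
    have hXj : (X : Polynomial ℂ)^(j-1) ≠ 0 := pow_ne_zero _ X_ne_zero
    have hDmonic : D.Monic := (monic_X_pow m).mul hmono
    have hDdeg2 : D.natDegree = m + n := by
      rw [hDdef, natDegree_mul hXm hpne0, natDegree_X_pow, hdeg]
    have hNdeg2 : Nn.natDegree = m + (j-1) + (n-j) := by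
      rw [hNdef, natDegree_mul (mul_ne_zero hQ hXj) hdpne, natDegree_mul hQ hXj,
        natDegree_X_pow, hm, hdpdeg]
    have hNm : Nn.natDegree = m + n - 1 := by omega
    have hdeglt : Nn.natDegree < D.natDegree := by omega
    have hDroots : ∀ α ∈ D.roots, ‖α‖ ≤ A := by
      intro α hα
      rw [hDdef, Polynomial.roots_mul (mul_ne_zero hXm hpne0)] at hα
      rcases Multiset.mem_add.mp hα with h | h
      · have h2 := Polynomial.isRoot_of_mem_roots h
        have h3 : α ^ m = 0 := by simpa [Polynomial.IsRoot] using h2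
        have h4 : α = 0 := by
          rcases pow_eq_zero_iff'.mp h3 with ⟨h5, _⟩
          exact h5
        rw [h4, norm_zero]
        exact hA0.le
      · exact hproots α h
    have hV := contour D Nn hDmonic hA1 hDroots hdeglt
    have hcoeff : Nn.coeff (D.natDegree - 1) = Q.leadingCoeff * (n.descFactorial j : ℂ) := by
      have h1 : D.natDegree - 1 = Nn.natDegree := by omega
      rw [h1, Polynomial.coeff_natDegree, hNdef, Polynomial.leadingCoeff_mul,
        Polynomial.leadingCoeff_mul, hdplead, Polynomial.leadingCoeff_X_pow, mul_one]
    by_contra hcon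
    push_neg at hcon
    set T : ℝ := 1/K * (n:ℝ)^(d*((m:ℝ)-j)+j) * s^((m:ℝ)-j) with hTdef
    have hTpos : 0 < T := by positivity
    have h2A1 : (1:ℝ) ≤ 2*A := by linarith
    have hbound : ∀ z ∈ Metric.sphere (0:ℂ) (2*A),
        ‖Nn.eval z / D.eval z‖ ≤ T * (2*A)^(j-1) / (2*A)^m := by
      intro z hz
      have hzn : ‖z‖ = 2*A := by
        simpa using mem_sphere_zero_iff_norm.mp hz
      have habs : ‖z‖ = 2*s*(n:ℝ)^d := by
        rw [hzn, hA]; ring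
      obtain ⟨hz', hza, hplow, hpne⟩ := hcircle z habs
      have hzne : z ≠ 0 := by
        intro h0; rw [h0, norm_zero] at hzn; linarith
      have hflt := hcon z habs
      have heq2 : Nn.eval z / D.eval z =
          (Q.eval z * ((derivative^[j] p).eval z / p.eval z)) * (z^(j-1) / z^m) := by
        rw [hNdef, hDdef]
        simp only [eval_mul, eval_pow, eval_X]
        field_simp
      rw [heq2, norm_mul, norm_div, norm_pow, norm_pow, hzn]
      have hfrac : (0:ℝ) ≤ (2*A)^(j-1)/(2*A)^m := by positivity
      calc ‖Q.eval z * ((derivative^[j] p).eval z / p.eval z)‖ * ((2*A)^(j-1)/(2*A)^m)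
          ≤ T * ((2*A)^(j-1)/(2*A)^m) := mul_le_mul_of_nonneg_right hflt.le hfrac
        _ = T * (2*A)^(j-1)/(2*A)^m := by ring
    have hnormV := circleIntegral.norm_integral_le_of_norm_le_const
      (by positivity : (0:ℝ) ≤ 2*A) hbound
    rw [hV] at hnormV
    have hVnorm : ‖(2*π*Complex.I) * Nn.coeff (D.natDegree - 1)‖ =
        2*π*(qm * (n.descFactorial j : ℝ)) := by
      rw [hcoeff, norm_mul, norm_mul, norm_mul]
      simp [Complex.norm_I, Complex.norm_natCast, Real.pi_nonneg, abs_of_nonneg,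
        Complex.norm_real]
      left
      rw [hqmdef]
    rw [hVnorm] at hnormV
    -- simplify RHS
    have hjpow : (2*A) * (2*A)^(j-1) = (2*A)^j := by
      rw [← pow_succ']
      congr 1
      omega
    have hpi : (0:ℝ) < π := Real.pi_pos
    have h2Am : (0:ℝ) < (2*A)^m := by positivity
    have h2Aj : (0:ℝ) < (2*A)^j := by positivity
    have h6 : qm * (n.descFactorial j : ℝ) * (2*A)^m ≤ T * (2*A)^j := by
      have h5 : qm * (n.descFactorial j : ℝ) ≤ (2*A) * (T * (2*A)^(j-1)/(2*A)^m) := by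
        nlinarith [hnormV]
      have h5' : qm * (n.descFactorial j : ℝ) ≤ T * (2*A)^j / (2*A)^m := by
        rw [← hjpow]
        calc qm * (n.descFactorial j : ℝ) ≤ (2*A) * (T * (2*A)^(j-1)/(2*A)^m) := h5
          _ = T * ((2*A) * (2*A)^(j-1)) / (2*A)^m := by ring
      rw [← le_div_iff₀ h2Am]
      exact h5'
    have h7 : T * (2*A)^j < qm * (n.descFactorial j : ℝ) * (2*A)^m := by
      -- rewrite T via hkey
      have hTeq : T * (2*A)^j = 1/K * (2^j * A^m * (n:ℝ)^j) := by
        rw [hTdef, mul_assoc (1/K), ← hkey, Real.rpow_sub hA0, Real.rpow_natCast, Real.rpow_natCast,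
          Real.rpow_natCast, mul_pow 2 A j]
        field_simp
      have hdesc := descFac_lower j n hn2j
      have hRHS : qm * (2^m * A^m * (n:ℝ)^j / 2^j) ≤ qm * (n.descFactorial j : ℝ) * (2*A)^m := by
        rw [mul_pow 2 A m]
        have h8 : (n:ℝ)^j / 2^j ≤ (n.descFactorial j : ℝ) := by
          rw [div_le_iff₀ (by positivity : (0:ℝ) < (2:ℝ)^j)]
          linarith [hdesc]
        calc qm * (2^m * A^m * (n:ℝ)^j / 2^j) = qm * (((n:ℝ)^j / 2^j) * (2^m * A^m)) := by ring
          _ ≤ qm * ((n.descFactorial j : ℝ) * (2^m * A^m)) := by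
              apply mul_le_mul_of_nonneg_left _ hqm.le
              apply mul_le_mul_of_nonneg_right h8 (by positivity)
          _ = qm * (n.descFactorial j : ℝ) * (2^m * A^m) := by ring
      have hLHS : 1/K * (2^j * A^m * (n:ℝ)^j) < qm * (2^m * A^m * (n:ℝ)^j / 2^j) := by
        have hx : (0:ℝ) < A^m * (n:ℝ)^j := by positivity
        have h9 : 1/K ≤ qm * 2^m / 2^(2*j+1) := hKinv
        have h10 : qm * 2^m / 2^(2*j+1) * 2^j < qm * 2^m / 2^j := by
          rw [div_mul_eq_mul_div, div_lt_div_iff₀ (by positivity) (by positivity)]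
          have hpow2 : (2:ℝ)^(2*j+1) = 2^j * 2^j * 2 := by
            rw [← pow_add, ← pow_succ]
            congr 1
            omega
          have hX : (0:ℝ) < qm * 2^m * 2^j * 2^j := by positivity
          rw [hpow2]
          nlinarith [hX]
        calc 1/K * (2^j * A^m * (n:ℝ)^j) = (1/K * 2^j) * (A^m * (n:ℝ)^j) := by ring
          _ ≤ (qm * 2^m / 2^(2*j+1) * 2^j) * (A^m * (n:ℝ)^j) := by
              apply mul_le_mul_of_nonneg_right _ hx.le
              apply mul_le_mul_of_nonneg_right h9 (by positivity)
          _ < (qm * 2^m / 2^j) * (A^m * (n:ℝ)^j) := by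
              apply mul_lt_mul_of_pos_right h10 hx
          _ = qm * (2^m * A^m * (n:ℝ)^j / 2^j) := by ring
      rw [hTeq]
      exact lt_of_lt_of_le hLHS hRHS
    linarith
end

section
/- Let T = Σ_{j=1}^k Q_j D^j be a linear differential operator with polynomial coefficients satisfying deg Q_j ≤ j for all j, with equality for at least one j, and deg Q_k < k. Let j₀ be the largest j with deg Q_j = j. If p is a polynomial of degree n with T(p) = λ p for some λ ∈ ℂ, then λ = Σ_{j=1}^{j₀} q_{j,j} · n!/(n−j)!, where q_{j,j} is the coefficient of z^j in Q_j. -/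
open Polynomial

theorem stmt11 (k : ℕ) (hk : 1 ≤ k) (Q : ℕ → Polynomial ℂ)
    (hdegle : ∀ j ∈ Finset.Icc 1 k, (Q j).degree ≤ (j : ℕ))
    (hdegk : (Q k).degree < (k : ℕ))
    (j₀ : ℕ) (hj₀mem : j₀ ∈ Finset.Icc 1 k) (hj₀deg : (Q j₀).degree = (j₀ : ℕ))
    (hj₀max : ∀ j ∈ Finset.Icc 1 k, (Q j).degree = (j : ℕ) → j ≤ j₀)
    (p : Polynomial ℂ) (hp : p ≠ 0) (n : ℕ) (hn : p.natDegree = n) (lam : ℂ)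
    (heig : ∑ j ∈ Finset.Icc 1 k, Q j * Polynomial.derivative^[j] p = lam • p) :
    lam = ∑ j ∈ Finset.Icc 1 j₀, (Q j).coeff j * (Nat.descFactorial n j : ℂ) := by
  have hpn : p.coeff n ≠ 0 := by
    rw [← hn]; exact Polynomial.leadingCoeff_ne_zero.mpr hp
  -- take coefficient n of both sides
  have hcoeff : ∀ j ∈ Finset.Icc 1 k,
      (Q j * Polynomial.derivative^[j] p).coeff n
        = (Q j).coeff j * (Nat.descFactorial n j : ℂ) * p.coeff n := by
    intro j hj
    simp only [Finset.mem_Icc] at hj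
    by_cases hjn : j ≤ n
    · rw [Polynomial.coeff_mul]
      rw [Finset.sum_eq_single (j, n - j)]
      · have : n - j + j = n := Nat.sub_add_cancel hjn
        rw [Polynomial.coeff_iterate_derivative, this, nsmul_eq_mul]
        push_cast; ring
      · rintro ⟨a, b⟩ hab hne
        rw [Finset.HasAntidiagonal.mem_antidiagonal] at hab
        rcases lt_or_ge j a with h | h
        · have : (Q j).coeff a = 0 := by
            apply Polynomial.coeff_eq_zero_of_degree_lt
            exact lt_of_le_of_lt (hdegle j (by simp [hj.1, hj.2])) (by exact_mod_cast h)
          simp [this]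
        · have ha : a < j ∨ a = j := lt_or_eq_of_le h
          rcases ha with h' | h'
          · have hb : n - j < b := by omega
            have : (Polynomial.derivative^[j] p).coeff b = 0 := by
              apply Polynomial.coeff_eq_zero_of_natDegree_lt
              exact lt_of_le_of_lt (le_trans (Polynomial.natDegree_iterate_derivative p j)
                (by omega)) hb
            simp [this]
          · exfalso; apply hne; subst h'; simp; omega
      · intro h
        exfalso; apply h; rw [Finset.HasAntidiagonal.mem_antidiagonal]; omega
    · have h1 : Polynomial.derivative^[j] p = 0 :=
        Polynomial.iterate_derivative_eq_zero (by omega)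
      have h2 : Nat.descFactorial n j = 0 := Nat.descFactorial_eq_zero_iff_lt.mpr (by omega)
      simp [h1, h2]
  have key : ∑ j ∈ Finset.Icc 1 k, (Q j).coeff j * (Nat.descFactorial n j : ℂ) * p.coeff n
      = lam * p.coeff n := by
    rw [← Finset.sum_congr rfl hcoeff, ← Polynomial.finset_sum_coeff, heig,
      Polynomial.coeff_smul, smul_eq_mul]
  -- restrict sum to Icc 1 j₀
  simp only [Finset.mem_Icc] at hj₀mem
  have hsub : Finset.Icc 1 j₀ ⊆ Finset.Icc 1 k := Finset.Icc_subset_Icc le_rfl hj₀mem.2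
  have hvan : ∀ j ∈ Finset.Icc 1 k, j ∉ Finset.Icc 1 j₀ →
      (Q j).coeff j * (Nat.descFactorial n j : ℂ) * p.coeff n = 0 := by
    intro j hj hj'
    simp only [Finset.mem_Icc, not_and, not_le] at hj hj'
    have hjgt : j₀ < j := hj' hj.1
    have hne : (Q j).degree ≠ (j : ℕ) := fun h =>
      absurd (hj₀max j (by simp [hj.1, hj.2]) h) (by omega)
    have : (Q j).coeff j = 0 :=
      Polynomial.coeff_eq_zero_of_degree_lt
        (lt_of_le_of_ne (hdegle j (by simp [hj.1, hj.2])) hne)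
    simp [this]
  have := (Finset.sum_subset hsub hvan).symm
  rw [this] at key
  rw [← Finset.sum_mul] at key
  exact (mul_right_cancel₀ hpn key).symm
end

section
/- Let T = Σ_{j=1}^k Q_j D^j be a degenerate exactly-solvable operator, j₀ the largest j with deg Q_j = j, and d = max_{j₀ < j ≤ k} (j − j₀)/(j − deg Q_j). Suppose for each n the monic eigenpolynomial p_n of degree n exists, and let r_n be the maximum modulus of the roots of p_n. Then there is a constant c > 0 with liminf_{n→∞} r_n/n^d ≥ c; equivalently, there exist s > 0 and N such that for all n ≥ N, p_n has a root of modulus greater than s·n^d. -/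
open Polynomial
set_option maxHeartbeats 1000000



lemma iterDeriv_linear_mul (a : ℂ) (q : Polynomial ℂ) (j : ℕ) :
    derivative^[j+1] ((X - C a) * q) =
      (X - C a) * derivative^[j+1] q + C ((j:ℂ)+1) * derivative^[j] q := by
  induction j with
  | zero => simp [derivative_mul]; ring
  | succ j ih =>
    rw [Function.iterate_succ_apply', ih]
    rw [derivative_add, derivative_mul, derivative_mul]
    simp [← Function.iterate_succ_apply' derivative]
    ring

lemma descFac_succ_left (n j : ℕ) :
    (n+1).descFactorial (j+1) = n.descFactorial (j+1) + (j+1) * n.descFactorial j := by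
  rcases le_or_gt j n with h | h
  · rw [Nat.succ_descFactorial_succ, Nat.descFactorial_succ]
    have h2 : n - j + (j+1) = n + 1 := by omega
    nlinarith [h2]
  · rw [Nat.descFactorial_eq_zero_iff_lt.2 h, Nat.descFactorial_eq_zero_iff_lt.2 (by omega),
      Nat.descFactorial_eq_zero_iff_lt.2 (by omega)]
    omega

noncomputable def lpr (s : Multiset ℂ) : Polynomial ℂ := (s.map (fun a => X - C a)).prod

lemma lpr_cons (a : ℂ) (s : Multiset ℂ) : lpr (a ::ₘ s) = (X - C a) * lpr s := by
  simp [lpr]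

lemma key_est (u : ℝ) (hu : 0 ≤ u) (x : ℂ) :
    ∀ (s : Multiset ℂ), (∀ a ∈ s, ‖a‖ ≤ u * ‖x - a‖) →
    ∀ j : ℕ,
      ‖x^j * Polynomial.eval x (derivative^[j] (lpr s))
        - ((Multiset.card s).descFactorial j : ℂ) * Polynomial.eval x (lpr s)‖
      ≤ ((1+u)^j - 1) * ((Multiset.card s).descFactorial j : ℝ)
          * ‖Polynomial.eval x (lpr s)‖ := by
  intro s
  induction s using Multiset.induction with
  | empty =>
    intro _ j
    cases j with
    | zero => simp [lpr]
    | succ j =>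
      have h0 : derivative^[j+1] (lpr 0) = 0 := by
        simp [lpr, Function.iterate_succ_apply]
      rw [h0]
      simp [Nat.descFactorial_eq_zero_iff_lt.2 (Nat.succ_pos j)]
  | cons a s ih =>
    intro hs j
    have hsa : ∀ b ∈ s, ‖b‖ ≤ u * ‖x - b‖ := by
      intro b hb; exact hs b (Multiset.mem_cons_of_mem hb)
    have ha : ‖a‖ ≤ u * ‖x - a‖ := hs a (Multiset.mem_cons_self a s)
    cases j with
    | zero => simp [lpr]
    | succ j =>
      rw [lpr_cons, Multiset.card_cons]
      set n := Multiset.card s with hn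
      -- key algebraic identity
      have hx : ‖x‖ ≤ (1+u) * ‖x - a‖ := by
        have := norm_add_le (x - a) a
        simp at this
        nlinarith [norm_nonneg (x - a)]
      have hid : x^(j+1) * Polynomial.eval x (derivative^[j+1] ((X - C a) * lpr s))
          - (((n+1).descFactorial (j+1) : ℕ) : ℂ) * Polynomial.eval x ((X - C a) * lpr s)
          = (x - a) * (x^(j+1) * Polynomial.eval x (derivative^[j+1] (lpr s))
              - ((n.descFactorial (j+1) : ℕ) : ℂ) * Polynomial.eval x (lpr s))
            + ((j:ℂ)+1) * x * (x^j * Polynomial.eval x (derivative^[j] (lpr s))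
              - ((n.descFactorial j : ℕ) : ℂ) * Polynomial.eval x (lpr s))
            + ((j:ℂ)+1) * ((n.descFactorial j : ℕ) : ℂ) * a * Polynomial.eval x (lpr s) := by
        rw [iterDeriv_linear_mul, descFac_succ_left]
        push_cast
        simp [eval_add, eval_mul, eval_sub, eval_C, eval_X, pow_succ]
        ring
      rw [hid]
      have hA := ih hsa (j+1)
      have hB := ih hsa j
      set A := x^(j+1) * Polynomial.eval x (derivative^[j+1] (lpr s))
          - ((n.descFactorial (j+1) : ℕ) : ℂ) * Polynomial.eval x (lpr s) with hAdef
      set B := x^j * Polynomial.eval x (derivative^[j] (lpr s))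
          - ((n.descFactorial j : ℕ) : ℂ) * Polynomial.eval x (lpr s) with hBdef
      have hE0 : (0:ℝ) ≤ ‖Polynomial.eval x (lpr s)‖ := norm_nonneg _
      have hy0 : (0:ℝ) ≤ ‖x - a‖ := norm_nonneg _
      have cj : ‖(j:ℂ)+1‖ = (j:ℝ)+1 := by
        rw [show ((j:ℂ)+1) = (((j:ℝ)+1 : ℝ) : ℂ) by push_cast; ring]
        rw [Complex.norm_real, Real.norm_eq_abs]
        rw [abs_of_nonneg (by positivity)]
      have cn : ‖((n.descFactorial j : ℕ) : ℂ)‖ = ((n.descFactorial j : ℕ) : ℝ) :=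
        Complex.norm_natCast _
      have habs3 : ‖(x - a) * A + ((j:ℂ)+1) * x * B
            + ((j:ℂ)+1) * ((n.descFactorial j : ℕ) : ℂ) * a * Polynomial.eval x (lpr s)‖
          ≤ ‖x - a‖ * ‖A‖
            + ((j:ℝ)+1) * ‖x‖ * ‖B‖
            + ((j:ℝ)+1) * ((n.descFactorial j : ℕ) : ℝ) * ‖a‖
                * ‖Polynomial.eval x (lpr s)‖ := by
        have h1 := norm_add_le ((x - a) * A + ((j:ℂ)+1) * x * B)
          (((j:ℂ)+1) * ((n.descFactorial j : ℕ) : ℂ) * a * Polynomial.eval x (lpr s))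
        have h2 := norm_add_le ((x - a) * A) (((j:ℂ)+1) * x * B)
        simp only [norm_mul, cj, cn] at h1 h2
        linarith
      refine le_trans habs3 ?_
      have hgj' : (0:ℝ) ≤ (1+u)^j - 1 := by
        have : (1:ℝ) ≤ (1+u)^j := one_le_pow₀ (by linarith)
        linarith
      have s1 : ‖x - a‖ * ‖A‖
          ≤ ‖x - a‖ * (((1+u)^(j+1) - 1) * (n.descFactorial (j+1) : ℝ)
              * ‖Polynomial.eval x (lpr s)‖) := by gcongr
      have s2 : ((j:ℝ)+1) * ‖x‖ * ‖B‖
          ≤ ((j:ℝ)+1) * ((1+u) * ‖x - a‖) * (((1+u)^j - 1)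
              * (n.descFactorial j : ℝ) * ‖Polynomial.eval x (lpr s)‖) := by
        have hBnn : (0:ℝ) ≤ ‖B‖ := norm_nonneg _
        gcongr ((j:ℝ)+1) * ?_ * ?_ <;> first | exact hx | exact hB | positivity
      have s3 : ((j:ℝ)+1) * ((n.descFactorial j : ℕ) : ℝ) * ‖a‖
            * ‖Polynomial.eval x (lpr s)‖
          ≤ ((j:ℝ)+1) * ((n.descFactorial j : ℕ) : ℝ) * (u * ‖x - a‖)
            * ‖Polynomial.eval x (lpr s)‖ := by gcongr
      have evp : ‖Polynomial.eval x ((X - C a) * lpr s)‖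
          = ‖x - a‖ * ‖Polynomial.eval x (lpr s)‖ := by
        rw [eval_mul, norm_mul, eval_sub, eval_X, eval_C]
      rw [evp, descFac_succ_left]
      push_cast
      have hsum := add_le_add (add_le_add s1 s2) s3
      refine le_trans hsum (le_of_eq ?_)
      rw [pow_succ]
      ring


lemma pow_one_add_le (u : ℝ) (hu : 0 ≤ u) :
    ∀ k : ℕ, 2*(k:ℝ)*u ≤ 1 → (1+u)^k ≤ 1 + 2*(k:ℝ)*u := by
  intro k
  induction k with
  | zero => simp
  | succ k ih =>
    intro h
    have hk : 2*(k:ℝ)*u ≤ 1 := by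
      have : (k:ℝ) ≤ (k:ℝ)+1 := by linarith
      push_cast at h
      nlinarith
    have h2 := ih hk
    have h3 : (1+u)^(k+1) = (1+u)^k * (1+u) := pow_succ _ _
    push_cast
    push_cast at h
    nlinarith [pow_nonneg (by linarith : (0:ℝ) ≤ 1+u) k]

lemma eval_abs_le (q : Polynomial ℂ) (x : ℂ) (hx : 1 ≤ ‖x‖) :
    ‖q.eval x‖
      ≤ (∑ i ∈ Finset.range (q.natDegree+1), ‖q.coeff i‖)
          * ‖x‖ ^ q.natDegree := by
  rw [Polynomial.eval_eq_sum_range]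
  refine le_trans (norm_sum_le _ _) ?_
  rw [Finset.sum_mul]
  apply Finset.sum_le_sum
  intro i hi
  rw [norm_mul, norm_pow]
  gcongr <;> first | exact hx | exact Nat.lt_succ_iff.mp (Finset.mem_range.mp hi) | positivity

lemma eval_abs_ge (q : Polynomial ℂ) (hq : q ≠ 0) (x : ℂ) (hx1 : 1 ≤ ‖x‖)
    (hx2 : 2 * (∑ i ∈ Finset.range q.natDegree, ‖q.coeff i‖)
        / ‖q.leadingCoeff‖ ≤ ‖x‖) :
    ‖q.leadingCoeff‖ / 2 * ‖x‖ ^ q.natDegree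
      ≤ ‖q.eval x‖ := by
  have hlead : 0 < ‖q.leadingCoeff‖ := by
    simpa [norm_pos_iff] using Polynomial.leadingCoeff_ne_zero.mpr hq
  have hx0 : 0 < ‖x‖ := lt_of_lt_of_le one_pos hx1
  have hS0 : 0 ≤ ∑ i ∈ Finset.range q.natDegree, ‖q.coeff i‖ :=
    Finset.sum_nonneg (fun _ _ => norm_nonneg _)
  have herr : ‖q.eval x - q.leadingCoeff * x^q.natDegree‖
      ≤ (∑ i ∈ Finset.range q.natDegree, ‖q.coeff i‖)
          * ‖x‖ ^ q.natDegree / ‖x‖ := by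
    rw [Polynomial.eval_eq_sum_range, Finset.sum_range_succ]
    rw [show q.coeff q.natDegree = q.leadingCoeff from rfl]
    rw [add_sub_cancel_right]
    refine le_trans (norm_sum_le _ _) ?_
    rw [Finset.sum_mul, Finset.sum_div]
    apply Finset.sum_le_sum
    intro i hi
    rw [norm_mul, norm_pow]
    rw [le_div_iff₀ hx0]
    have : ‖x‖ ^ i * ‖x‖ = ‖x‖ ^ (i+1) := by ring
    rw [mul_assoc, this]
    gcongr <;> first | exact hx1 | exact Finset.mem_range.mp hi | positivity
  have htri : ‖q.leadingCoeff * x^q.natDegree‖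
        - ‖q.eval x - q.leadingCoeff * x^q.natDegree‖
      ≤ ‖q.eval x‖ := by
    have h1 := norm_add_le
      (q.leadingCoeff * x^q.natDegree - q.eval x) (q.eval x)
    have h2 : ‖q.leadingCoeff * x ^ q.natDegree - q.eval x‖
        = ‖q.eval x - q.leadingCoeff * x^q.natDegree‖ := by
      rw [show q.leadingCoeff * x ^ q.natDegree - q.eval x
        = -(q.eval x - q.leadingCoeff * x^q.natDegree) by ring, norm_neg]
    rw [show q.leadingCoeff * x ^ q.natDegree - q.eval x + q.eval x
        = q.leadingCoeff * x ^ q.natDegree by ring] at h1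
    linarith
  have hmain : (∑ i ∈ Finset.range q.natDegree, ‖q.coeff i‖)
        * ‖x‖ ^ q.natDegree / ‖x‖
      ≤ ‖q.leadingCoeff‖ / 2 * ‖x‖ ^ q.natDegree := by
    rw [div_le_iff₀ hlead] at hx2
    rw [div_le_iff₀ hx0]
    have hpw : (0:ℝ) ≤ ‖x‖ ^ q.natDegree := by positivity
    nlinarith
  rw [norm_mul, norm_pow] at htri
  linarith

lemma descFac_lower (j : ℕ) :
    ∀ᶠ n : ℕ in Filter.atTop, ((n:ℝ))^j / 2 ≤ (n.descFactorial j : ℝ) := by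
  filter_upwards [Filter.eventually_ge_atTop (2*j*j + j + 1)] with n hn
  have hm0 : (0:ℝ) < (n:ℝ) := by
    have : 1 ≤ n := by omega
    exact_mod_cast Nat.lt_of_lt_of_le Nat.zero_lt_one this
  have hjn : (j:ℝ) ≤ (n:ℝ) := by exact_mod_cast (by omega : j ≤ n)
  have h1 : ((n+1-j)^j : ℕ) ≤ n.descFactorial j := Nat.pow_sub_le_descFactorial n j
  have h1r : (((n+1-j)^j : ℕ) : ℝ) ≤ (n.descFactorial j : ℝ) := by exact_mod_cast h1
  have hcast : (((n+1-j) : ℕ) : ℝ) = (n:ℝ) + 1 - j := by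
    have : j ≤ n + 1 := by omega
    push_cast [Nat.cast_sub this]
    ring
  rw [Nat.cast_pow, hcast] at h1r
  have key : (n:ℝ)^j / 2 ≤ ((n:ℝ) - j)^j := by
    have hber : 1 - (j:ℝ)*((j:ℝ)/(n:ℝ)) ≤ (1 - (j:ℝ)/(n:ℝ))^j := by
      have := one_add_mul_le_pow (a := -((j:ℝ)/(n:ℝ))) (by
        have : (j:ℝ)/(n:ℝ) ≤ 1 := by
          rw [div_le_one hm0]; exact hjn
        linarith) j
      calc 1 - (j:ℝ)*((j:ℝ)/(n:ℝ)) = 1 + (j:ℝ) * (-((j:ℝ)/(n:ℝ))) := by ring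
        _ ≤ (1 + -((j:ℝ)/(n:ℝ)))^j := this
        _ = (1 - (j:ℝ)/(n:ℝ))^j := by ring_nf
    have hfac : ((n:ℝ) * (1 - (j:ℝ)/(n:ℝ)))^j = ((n:ℝ) - j)^j := by
      congr 1
      field_simp
    have hhalf : (1:ℝ)/2 ≤ 1 - (j:ℝ)*((j:ℝ)/(n:ℝ)) := by
      rw [mul_div_assoc']
      have h2 : (j:ℝ)*(j:ℝ) / (n:ℝ) ≤ 1/2 := by
        rw [div_le_iff₀ hm0]
        have : (2*j*j : ℕ) ≤ n := by omega
        have := (Nat.cast_le (α := ℝ)).mpr this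
        push_cast at this
        linarith
      linarith
    have hpow : (n:ℝ)^j * (1 - (j:ℝ)*((j:ℝ)/(n:ℝ))) ≤ (n:ℝ)^j * (1 - (j:ℝ)/(n:ℝ))^j := by
      apply mul_le_mul_of_nonneg_left hber (by positivity)
    rw [← mul_pow] at hpow
    rw [hfac] at hpow
    nlinarith [pow_nonneg (le_of_lt hm0) j]
  have hle : ((n:ℝ) - j)^j ≤ ((n:ℝ) + 1 - j)^j := by
    apply pow_le_pow_left₀ (by linarith) (by linarith) j
  linarith

lemma coeff_mul_top (q r : Polynomial ℂ) (n j : ℕ) (hjn : j ≤ n)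
    (hq : q.natDegree ≤ j) (hr : r.natDegree ≤ n - j) :
    (q*r).coeff n = q.coeff j * r.coeff (n-j) := by
  rw [Polynomial.coeff_mul]
  apply Finset.sum_eq_single_of_mem (j, n-j)
  · rw [Finset.HasAntidiagonal.mem_antidiagonal]; omega
  · rintro ⟨i1,i2⟩ hmem hne
    rw [Finset.HasAntidiagonal.mem_antidiagonal] at hmem
    simp only at hmem
    have hne' : i1 ≠ j ∨ i2 ≠ n - j := by
      by_contra hcon
      push_neg at hcon
      exact hne (by simp [Prod.ext_iff, hcon.1, hcon.2])
    by_cases h1 : j < i1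
    · rw [Polynomial.coeff_eq_zero_of_natDegree_lt (lt_of_le_of_lt hq h1), zero_mul]
    · have h2 : r.natDegree < i2 := by omega
      rw [Polynomial.coeff_eq_zero_of_natDegree_lt h2, mul_zero]


theorem stmt12 (k : ℕ) (hk : 1 ≤ k) (Q : ℕ → Polynomial ℂ)
    (hdegle : ∀ j ∈ Finset.Icc 1 k, (Q j).degree ≤ (j : ℕ))
    (hdegk : (Q k).degree < (k : ℕ))
    (j₀ : ℕ) (hj₀mem : j₀ ∈ Finset.Icc 1 k) (hj₀deg : (Q j₀).degree = (j₀ : ℕ))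
    (hj₀max : ∀ j ∈ Finset.Icc 1 k, (Q j).degree = (j : ℕ) → j ≤ j₀)
    (d : ℝ)
    (hdub : ∀ j : ℕ, j₀ < j → j ≤ k → Q j ≠ 0 →
      ((j : ℝ) - j₀) / ((j : ℝ) - (Q j).natDegree) ≤ d)
    (hdmem : ∃ j : ℕ, j₀ < j ∧ j ≤ k ∧ Q j ≠ 0 ∧
      ((j : ℝ) - j₀) / ((j : ℝ) - (Q j).natDegree) = d)
    (p : ℕ → Polynomial ℂ) (lam : ℕ → ℂ)
    (hmonic : ∀ n, (p n).Monic) (hdeg : ∀ n, (p n).natDegree = n)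
    (heig : ∀ n, ∑ j ∈ Finset.Icc 1 k, Q j * Polynomial.derivative^[j] (p n)
      = lam n • p n) :
    ∃ s : ℝ, 0 < s ∧ ∃ N : ℕ, ∀ n : ℕ, N ≤ n →
      ∃ α ∈ (p n).roots, s * (n : ℝ) ^ d < ‖α‖ := by
  classical
  obtain ⟨hj₀1, hj₀k⟩ := Finset.mem_Icc.mp hj₀mem
  have hQnatle : ∀ j ∈ Finset.Icc 1 k, (Q j).natDegree ≤ j := fun j hj =>
    Polynomial.natDegree_le_iff_degree_le.2 (hdegle j hj)
  have hndlt : ∀ j, j₀ < j → j ≤ k → Q j ≠ 0 → (Q j).natDegree < j := by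
    intro j h1 h2 h3
    rcases lt_or_eq_of_le (hQnatle j (Finset.mem_Icc.mpr ⟨by omega, h2⟩)) with h | h
    · exact h
    · exfalso
      have hdeg' : (Q j).degree = (j:ℕ) := by
        rw [Polynomial.degree_eq_natDegree h3, h]
      have := hj₀max j (Finset.mem_Icc.mpr ⟨by omega, h2⟩) hdeg'
      omega
  obtain ⟨j₁, hj₁a, hj₁b, hj₁c, hj₁d⟩ := hdmem
  have hd0 : 0 < d := by
    rw [← hj₁d]
    apply div_pos
    · have : (j₀:ℝ) < (j₁:ℝ) := by exact_mod_cast hj₁a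
      linarith
    · have := hndlt j₁ hj₁a hj₁b hj₁c
      have : ((Q j₁).natDegree : ℝ) < (j₁:ℝ) := by exact_mod_cast this
      linarith
  -- the achiever set and maximal achiever js
  set S := (Finset.Icc 1 k).filter (fun j => j₀ < j ∧ Q j ≠ 0 ∧
      ((j : ℝ) - j₀) / ((j : ℝ) - (Q j).natDegree) = d) with hSdef
  have hSne : S.Nonempty := by
    refine ⟨j₁, ?_⟩
    rw [hSdef, Finset.mem_filter, Finset.mem_Icc]
    exact ⟨⟨by omega, hj₁b⟩, hj₁a, hj₁c, hj₁d⟩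
  obtain ⟨js, hjsS, hjsmax⟩ := S.exists_max_image (fun j => j - (Q j).natDegree) hSne
  rw [hSdef, Finset.mem_filter, Finset.mem_Icc] at hjsS
  obtain ⟨⟨hjs1, hjsk⟩, hjsgt, hjsne, hjseq⟩ := hjsS
  set ts := (Q js).natDegree with hts
  set ms := js - ts with hms
  have htslt : ts < js := hndlt js hjsgt hjsk hjsne
  have hms1 : 1 ≤ ms := by omega
  have hmsk : ms ≤ k := by omega
  have hmscast : (ms:ℝ) = (js:ℝ) - (ts:ℝ) := by
    rw [hms]; push_cast [Nat.cast_sub (le_of_lt htslt)]; ring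
  have hdms : d * (ms:ℝ) = (js:ℝ) - (j₀:ℝ) := by
    rw [← hjseq, hmscast]
    have h5 : (ts:ℝ) < (js:ℝ) := by exact_mod_cast htslt
    exact div_mul_cancel₀ _ (sub_ne_zero.mpr (ne_of_gt h5))
  -- constants
  set A := ∑ j ∈ Finset.Icc 1 k, ‖(Q j).coeff j‖ with hA
  set B := ∑ j ∈ Finset.Icc 1 k,
      (∑ i ∈ Finset.range ((Q j).natDegree+1), ‖(Q j).coeff i‖) with hB
  have hA0 : 0 ≤ A := Finset.sum_nonneg (fun _ _ => norm_nonneg _)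
  have hB0 : 0 ≤ B := Finset.sum_nonneg (fun _ _ =>
    Finset.sum_nonneg (fun _ _ => norm_nonneg _))
  set qs := ‖(Q js).leadingCoeff‖ with hqs
  have hqs0 : 0 < qs := by
    rw [hqs]
    simpa [norm_pos_iff] using Polynomial.leadingCoeff_ne_zero.mpr hjsne
  set ε := min 1 (qs / (8*(A + 2*B) + 8)) with hεdef
  have hε0 : 0 < ε := lt_min one_pos (div_pos hqs0 (by linarith))
  have hε1 : ε ≤ 1 := min_le_left _ _
  have hεlt : (A + 2*B) * ε < qs/8 := by
    have h1 : ε ≤ qs / (8*(A + 2*B) + 8) := min_le_right _ _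
    have h2 : (A + 2*B) * ε ≤ (A + 2*B) * (qs / (8*(A + 2*B) + 8)) := by
      apply mul_le_mul_of_nonneg_left h1 (by linarith)
    have h3 : (A + 2*B) * (qs / (8*(A + 2*B) + 8)) < qs/8 := by
      have hden : (0:ℝ) < 8*(A+2*B)+8 := by linarith
      rw [mul_div_assoc', div_lt_div_iff₀ hden (by norm_num)]
      nlinarith [hqs0, hA0, hB0]
    linarith
  clear_value A B qs ε
  have hk0 : (0:ℝ) < (k:ℝ) := by exact_mod_cast hk
  refine ⟨ε/(8*k), div_pos hε0 (by linarith), ?_⟩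
  have hMain : ∀ᶠ n : ℕ in Filter.atTop,
      ∃ α ∈ (p n).roots, ε/(8*k) * (n : ℝ) ^ d < ‖α‖ := by
    have hndto : Filter.Tendsto (fun n : ℕ => ε * (n:ℝ)^d) Filter.atTop Filter.atTop := by
      apply Filter.Tendsto.const_mul_atTop hε0
      exact (tendsto_rpow_atTop hd0).comp tendsto_natCast_atTop_atTop
    set X₀ := 2 * (∑ i ∈ Finset.range (Q js).natDegree, ‖(Q js).coeff i‖)
        / ‖(Q js).leadingCoeff‖ with hX₀
    -- eventual per-term comparison
    have hKI : ∀ᶠ n : ℕ in Filter.atTop, ∀ j ∈ Finset.Icc 1 k, j ≠ js → Q j ≠ 0 →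
        (ε*(n:ℝ)^d)^(k - (j - (Q j).natDegree)) * (n:ℝ)^(j:ℕ)
          ≤ ε ^ ((1:ℝ) + ((k:ℝ) - (ms:ℝ))) * (n:ℝ)^((j₀:ℝ) + d*(k:ℝ)) := by
      rw [Finset.eventually_all]
      intro j hj
      by_cases hjne : j = js
      · exact Filter.Eventually.of_forall (fun n h1 _ => absurd hjne h1)
      by_cases hQ0 : Q j = 0
      · exact Filter.Eventually.of_forall (fun n _ h2 => absurd hQ0 h2)
      obtain ⟨hj1, hjk⟩ := Finset.mem_Icc.mp hj
      set tj := (Q j).natDegree with htj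
      set mj := j - tj with hmj
      have htjle : tj ≤ j := hQnatle j hj
      have hmjk : mj ≤ k := by omega
      have hmjcast : (mj:ℝ) = (j:ℝ) - (tj:ℝ) := by
        rw [hmj]; push_cast [Nat.cast_sub htjle]; ring
      -- dichotomy
      have hcase : ((j:ℝ) - d*(mj:ℝ) < (j₀:ℝ)) ∨
          (((j:ℝ) - d*(mj:ℝ) = (j₀:ℝ)) ∧ mj < ms) := by
        rcases le_or_gt j j₀ with hle | hgt
        · rcases Nat.eq_zero_or_pos mj with hmj0 | hmj0
          · rcases lt_or_eq_of_le hle with h | h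
            · left
              rw [hmj0]
              push_cast
              have : (j:ℝ) < (j₀:ℝ) := by exact_mod_cast h
              linarith
            · right
              constructor
              · rw [hmj0]; push_cast; rw [h]; ring
              · omega
          · left
            have h1 : 0 < d * (mj:ℝ) := by
              apply mul_pos hd0
              exact_mod_cast hmj0
            have h2 : (j:ℝ) ≤ (j₀:ℝ) := by exact_mod_cast hle
            linarith
        · have htjlt : tj < j := hndlt j hgt hjk hQ0
          have hmj0 : 0 < mj := by omega
          have hd1 := hdub j hgt hjk hQ0
          have hden : (0:ℝ) < (j:ℝ) - (tj:ℝ) := by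
            have : (tj:ℝ) < (j:ℝ) := by exact_mod_cast htjlt
            linarith
          have h1 : (j:ℝ) - (j₀:ℝ) ≤ d * (mj:ℝ) := by
            rw [hmjcast]
            rw [div_le_iff₀ hden] at hd1
            linarith
          rcases lt_or_eq_of_le h1 with h2 | h2
          · left; linarith
          · right
            constructor
            · linarith
            · -- j is an achiever, so mj ≤ ms; mj = ms would force j = js
              have hach : ((j:ℝ) - (j₀:ℝ)) / ((j:ℝ) - (tj:ℝ)) = d := by
                rw [← hmjcast, h2]
                exact mul_div_cancel_right₀ d (by
                  have : (0:ℝ) < (mj:ℝ) := by exact_mod_cast hmj0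
                  linarith)
              have hjS : j ∈ S := by
                rw [hSdef, Finset.mem_filter, Finset.mem_Icc]
                exact ⟨⟨hj1, hjk⟩, hgt, hQ0, hach⟩
              have hle2 : mj ≤ ms := hjsmax j hjS
              rcases lt_or_eq_of_le hle2 with h3 | h3
              · exact h3
              · exfalso
                apply hjne
                have h4 : (j:ℝ) = (js:ℝ) := by
                  have h5 : d * (mj:ℝ) = d * (ms:ℝ) := by rw [h3]
                  rw [hdms] at h5
                  linarith [h2, h5]
                exact_mod_cast h4
      -- now prove the eventual inequality
      have hconv : ∀ n : ℕ, 1 ≤ n →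
          (ε*(n:ℝ)^d)^(k - mj) * (n:ℝ)^(j:ℕ)
            = ε ^ (((k:ℝ) - (mj:ℝ))) * (n:ℝ)^(d*((k:ℝ)-(mj:ℝ)) + (j:ℝ)) := by
        intro n hn1
        have hnR0 : (0:ℝ) < (n:ℝ) := by exact_mod_cast hn1
        rw [mul_pow]
        rw [← Real.rpow_natCast ε (k - mj), ← Real.rpow_natCast ((n:ℝ)^d) (k - mj),
          ← Real.rpow_natCast (n:ℝ) j]
        rw [← Real.rpow_mul (le_of_lt hnR0)]
        have hc : ((k - mj : ℕ):ℝ) = (k:ℝ) - (mj:ℝ) := by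
          push_cast [Nat.cast_sub hmjk]; ring
        rw [mul_assoc, ← Real.rpow_add hnR0, hc]
      rcases hcase with hstrict | ⟨heq, hmlt⟩
      · -- strict case : eventually
        set γ := (j₀:ℝ) - ((j:ℝ) - d*(mj:ℝ)) with hγ
        have hγ0 : 0 < γ := by rw [hγ]; linarith
        have hto : Filter.Tendsto (fun n : ℕ => (n:ℝ)^γ) Filter.atTop Filter.atTop :=
          (tendsto_rpow_atTop hγ0).comp tendsto_natCast_atTop_atTop
        filter_upwards [Filter.eventually_ge_atTop 1,
          hto.eventually_ge_atTop (ε^(-((k:ℝ)+1)))] with n hn1 hnγ _ _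
        have hnR0 : (0:ℝ) < (n:ℝ) := by exact_mod_cast hn1
        rw [hconv n hn1]
        have h1 : ε ^ ((k:ℝ) - (mj:ℝ)) ≤ 1 := by
          apply Real.rpow_le_one (le_of_lt hε0) hε1
          have : (mj:ℝ) ≤ (k:ℝ) := by exact_mod_cast hmjk
          linarith
        have h2 : (n:ℝ)^(d*((k:ℝ)-(mj:ℝ)) + (j:ℝ))
            = (n:ℝ)^((j₀:ℝ) + d*(k:ℝ)) * (n:ℝ)^(-γ) := by
          rw [← Real.rpow_add hnR0]
          congr 1
          rw [hγ]
          ring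
        have h3 : (n:ℝ)^(-γ) ≤ ε^((k:ℝ)+1) := by
          rw [Real.rpow_neg (le_of_lt hnR0)]
          rw [Real.rpow_neg (le_of_lt hε0)] at hnγ
          have hεp : (0:ℝ) < ε^((k:ℝ)+1) := Real.rpow_pos_of_pos hε0 _
          have hnp : (0:ℝ) < (n:ℝ)^γ := Real.rpow_pos_of_pos hnR0 _
          exact inv_le_of_inv_le₀ hεp hnγ
        calc ε ^ ((k:ℝ) - (mj:ℝ)) * (n:ℝ)^(d*((k:ℝ)-(mj:ℝ)) + (j:ℝ))
            ≤ 1 * (n:ℝ)^(d*((k:ℝ)-(mj:ℝ)) + (j:ℝ)) :=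
              mul_le_mul_of_nonneg_right h1 (Real.rpow_nonneg (le_of_lt hnR0) _)
          _ = (n:ℝ)^((j₀:ℝ) + d*(k:ℝ)) * (n:ℝ)^(-γ) := by rw [one_mul, h2]
          _ ≤ (n:ℝ)^((j₀:ℝ) + d*(k:ℝ)) * ε^((k:ℝ)+1) :=
              mul_le_mul_of_nonneg_left h3 (Real.rpow_nonneg (le_of_lt hnR0) _)
          _ ≤ ε ^ ((1:ℝ) + ((k:ℝ) - (ms:ℝ))) * (n:ℝ)^((j₀:ℝ) + d*(k:ℝ)) := by
              rw [mul_comm]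
              apply mul_le_mul_of_nonneg_right _ (Real.rpow_nonneg (le_of_lt hnR0) _)
              apply Real.rpow_le_rpow_of_exponent_ge hε0 hε1
              have h6 : (0:ℝ) ≤ (ms:ℝ) := by positivity
              linarith
      · -- equality case
        filter_upwards [Filter.eventually_ge_atTop 1] with n hn1 _ _
        rw [hconv n hn1]
        have hnR0 : (0:ℝ) < (n:ℝ) := by exact_mod_cast hn1
        have h1 : d*((k:ℝ)-(mj:ℝ)) + (j:ℝ) = (j₀:ℝ) + d*(k:ℝ) := by nlinarith [heq]
        rw [h1]
        have h2 : ε ^ ((k:ℝ) - (mj:ℝ)) ≤ ε ^ ((1:ℝ) + ((k:ℝ) - (ms:ℝ))) := by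
          apply Real.rpow_le_rpow_of_exponent_ge hε0 hε1
          have h3 : (mj:ℝ) + 1 ≤ (ms:ℝ) := by exact_mod_cast hmlt
          linarith
        apply mul_le_mul_of_nonneg_right h2 (Real.rpow_nonneg (le_of_lt hnR0) _)
    have hknn : (1:ℝ) ≤ (k:ℝ) := by exact_mod_cast hk
    filter_upwards [hKI, descFac_lower js, hndto.eventually_ge_atTop (max 1 X₀),
      Filter.eventually_ge_atTop (max k 1)] with n hKIn hFn hXn hkn
    by_contra hcon
    push_neg at hcon
    set nd := (n:ℝ)^d with hnd
    have hn1 : 1 ≤ n := le_trans (le_max_right k 1) hkn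
    have hknle : k ≤ n := le_trans (le_max_left k 1) hkn
    have hnR0 : (0:ℝ) < (n:ℝ) := by exact_mod_cast hn1
    have hnd0 : 0 < nd := Real.rpow_pos_of_pos hnR0 d
    have hX1 : (1:ℝ) ≤ ε * nd := le_trans (le_max_left _ _) hXn
    have hXX0 : X₀ ≤ ε * nd := le_trans (le_max_right _ _) hXn
    have hX0 : (0:ℝ) < ε * nd := lt_of_lt_of_le one_pos hX1
    set x : ℂ := ((ε * nd : ℝ) : ℂ) with hx
    have habsx : ‖x‖ = ε * nd := by
      rw [hx, Complex.norm_real, Real.norm_eq_abs, abs_of_pos hX0]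
    have hpne : p n ≠ 0 := (hmonic n).ne_zero
    have hrootsb : ∀ α ∈ (p n).roots, ‖α‖ ≤ (ε*nd)/(8*k) := by
      intro α hα
      have h1 := hcon α hα
      have h2 : ε/(8*k) * nd = (ε*nd)/(8*k) := by ring
      rw [← h2]
      exact h1
    -- roots are small relative to x
    have hu : ∀ α ∈ (p n).roots, ‖α‖ ≤ (1/(4*(k:ℝ))) * ‖x - α‖ := by
      intro α hα
      have h1 := hrootsb α hα
      have h2 : ε*nd - ‖α‖ ≤ ‖x - α‖ := by
        have h3 := norm_add_le (x - α) α
        rw [sub_add_cancel, habsx] at h3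
        linarith
      have h4 : (4*(k:ℝ)+1) * ‖α‖ ≤ (4*(k:ℝ)+1) * ((ε*nd)/(8*k)) := by
        apply mul_le_mul_of_nonneg_left h1 (by linarith)
      have h5 : (4*(k:ℝ)+1) * ((ε*nd)/(8*k)) ≤ ε*nd := by
        rw [mul_div_assoc']
        rw [div_le_iff₀ (by linarith : (0:ℝ) < 8*(k:ℝ))]
        nlinarith [hX0]
      have h6 : 4*(k:ℝ) * ‖α‖ ≤ ‖x - α‖ := by linarith
      rw [div_mul_eq_mul_div, one_mul, le_div_iff₀ (by linarith : (0:ℝ) < 4*(k:ℝ))]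
      linarith
    have hu0 : (0:ℝ) ≤ 1/(4*(k:ℝ)) := by positivity
    have hprod : p n = lpr ((p n).roots) := by
      rw [lpr]
      exact (IsAlgClosed.splits _).eq_prod_roots_of_monic (hmonic n)
    have hcard : Multiset.card ((p n).roots) = n := by
      have h1 := (IsAlgClosed.splits (p n)).natDegree_eq_card_roots
      rw [← h1, hdeg]
    -- the key derivative estimates
    have hW : ∀ j ≤ k, ‖x^j * Polynomial.eval x (derivative^[j] (p n))
          - ((n.descFactorial j : ℕ):ℂ) * Polynomial.eval x (p n)‖
        ≤ (1/2) * ((n.descFactorial j : ℕ):ℝ) * ‖Polynomial.eval x (p n)‖ := by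
      intro j hj
      have h1 := key_est (1/(4*(k:ℝ))) hu0 x ((p n).roots) hu j
      rw [hcard, ← hprod] at h1
      refine le_trans h1 ?_
      have hb1 : (1:ℝ) ≤ 1 + 1/(4*(k:ℝ)) := by
        rw [le_add_iff_nonneg_right]; positivity
      have h2 : (1+1/(4*(k:ℝ)))^j ≤ (1+1/(4*(k:ℝ)))^k := pow_le_pow_right₀ hb1 hj
      have h3 : (1+1/(4*(k:ℝ)))^k ≤ 1 + 2*(k:ℝ)*(1/(4*(k:ℝ))) := by
        apply pow_one_add_le _ (by positivity) k
        rw [mul_one_div]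
        rw [div_le_one (by linarith : (0:ℝ) < 4*(k:ℝ))]
        linarith
      have h4 : 2*(k:ℝ)*(1/(4*(k:ℝ))) = 1/2 := by
        have hkne : (k:ℝ) ≠ 0 := by linarith
        field_simp
        ring
      have h5 : (1+1/(4*(k:ℝ)))^j - 1 ≤ 1/2 := by rw [h4] at h3; linarith
      apply mul_le_mul_of_nonneg_right _ (norm_nonneg _)
      apply mul_le_mul_of_nonneg_right h5 (by positivity)
    -- eval x (p n) is nonzero
    have hPne : Polynomial.eval x (p n) ≠ 0 := by
      intro h0
      have hxroot : x ∈ (p n).roots := by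
        rw [Polynomial.mem_roots hpne]
        exact h0
      have h1 := hrootsb x hxroot
      rw [habsx] at h1
      have h2 : (ε*nd)/(8*k) < ε*nd := by
        rw [div_lt_iff₀ (by linarith : (0:ℝ) < 8*(k:ℝ))]
        nlinarith [hX0]
      linarith
    set P := ‖Polynomial.eval x (p n)‖ with hP
    have hP0 : 0 < P := norm_pos_iff.mpr hPne
    -- eigenvalue formula and bound
    have hc1 : (p n).coeff n = 1 := by
      have h := (hmonic n).coeff_natDegree
      rwa [hdeg n] at h
    have hlam : lam n = ∑ j ∈ Finset.Icc 1 k,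
        (Q j).coeff j * ((n.descFactorial j : ℕ):ℂ) := by
      have h1 := congrArg (fun q : Polynomial ℂ => q.coeff n) (heig n)
      simp only [Polynomial.finset_sum_coeff, Polynomial.coeff_smul, smul_eq_mul] at h1
      rw [hc1, mul_one] at h1
      rw [← h1]
      apply Finset.sum_congr rfl
      intro j hj
      obtain ⟨hj1, hjk⟩ := Finset.mem_Icc.mp hj
      have hjn : j ≤ n := le_trans hjk hknle
      rw [coeff_mul_top (Q j) _ n j hjn (hQnatle j hj)
        (le_trans (Polynomial.natDegree_iterate_derivative _ _) (by rw [hdeg]))]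
      rw [Polynomial.coeff_iterate_derivative]
      have h2 : n - j + j = n := by omega
      rw [h2, hc1, nsmul_eq_mul, mul_one]
    have hlamb : ‖lam n‖ ≤ A * (n:ℝ)^(j₀:ℕ) := by
      rw [hlam]
      refine le_trans (norm_sum_le _ _) ?_
      rw [hA, Finset.sum_mul]
      apply Finset.sum_le_sum
      intro j hj
      rw [norm_mul, Complex.norm_natCast]
      by_cases hcz : (Q j).coeff j = 0
      · rw [hcz]
        simp only [norm_zero, zero_mul]
        positivity
      · have h1 : (j:ℕ) ≤ (Q j).natDegree := Polynomial.le_natDegree_of_ne_zero hcz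
        have h3 : (Q j).natDegree = j := le_antisymm (hQnatle j hj) h1
        have hQjne : Q j ≠ 0 := by
          intro h; apply hcz; rw [h]; simp
        have hdegj : (Q j).degree = (j:ℕ) := by
          rw [Polynomial.degree_eq_natDegree hQjne, h3]
        have hjj₀ : j ≤ j₀ := hj₀max j hj hdegj
        have h4 : ((n.descFactorial j : ℕ):ℝ) ≤ (n:ℝ)^(j₀:ℕ) := by
          have h5 : n.descFactorial j ≤ n^j := Nat.descFactorial_le_pow n j
          have h6 : n^j ≤ n^j₀ := Nat.pow_le_pow_right (by omega) hjj₀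
          exact_mod_cast le_trans h5 h6
        exact mul_le_mul_of_nonneg_left h4 (norm_nonneg _)
    -- evaluate the eigen-equation at x and multiply by x^k
    have heval : ∑ j ∈ Finset.Icc 1 k,
          (Q j).eval x * Polynomial.eval x (derivative^[j] (p n))
        = lam n * Polynomial.eval x (p n) := by
      have h1 := congrArg (Polynomial.eval x) (heig n)
      rw [Polynomial.eval_finset_sum] at h1
      simp only [Polynomial.eval_mul, Polynomial.eval_smul, smul_eq_mul] at h1
      exact h1
    have hsum : ∑ j ∈ Finset.Icc 1 k, (Q j).eval x * x^(k-j)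
          * (x^j * Polynomial.eval x (derivative^[j] (p n)))
        = lam n * Polynomial.eval x (p n) * x^k := by
      rw [← heval, Finset.sum_mul]
      apply Finset.sum_congr rfl
      intro j hj
      obtain ⟨hj1, hjk⟩ := Finset.mem_Icc.mp hj
      have h2 : x^(k-j) * x^j = x^k := by
        rw [← pow_add]
        congr 1
        omega
      calc (Q j).eval x * x^(k-j) * (x^j * Polynomial.eval x (derivative^[j] (p n)))
          = (Q j).eval x * Polynomial.eval x (derivative^[j] (p n)) * (x^(k-j) * x^j) := by
            ring
        _ = (Q j).eval x * Polynomial.eval x (derivative^[j] (p n)) * x^k := by rw [h2]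
    have hjsmem : js ∈ Finset.Icc 1 k := Finset.mem_Icc.mpr ⟨hjs1, hjsk⟩
    have hsplit := Finset.sum_erase_add (Finset.Icc 1 k)
      (fun j => (Q j).eval x * x^(k-j)
        * (x^j * Polynomial.eval x (derivative^[j] (p n)))) hjsmem
    have hgjs : (Q js).eval x * x^(k-js)
          * (x^js * Polynomial.eval x (derivative^[js] (p n)))
        = lam n * Polynomial.eval x (p n) * x^k
          - ∑ j ∈ (Finset.Icc 1 k).erase js,
              (Q j).eval x * x^(k-j) * (x^j * Polynomial.eval x (derivative^[j] (p n))) := by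
      rw [← hsum, ← hsplit]
      ring
    -- lower bound for W js
    have hWjs_lb : (1/4) * (n:ℝ)^(js:ℕ) * P
        ≤ ‖x^js * Polynomial.eval x (derivative^[js] (p n))‖ := by
      have h1 := hW js hjsk
      have h2 : ‖((n.descFactorial js : ℕ):ℂ) * Polynomial.eval x (p n)‖
          = ((n.descFactorial js : ℕ):ℝ) * P := by
        rw [norm_mul, Complex.norm_natCast]
      have h3 := norm_add_le
        (((n.descFactorial js : ℕ):ℂ) * Polynomial.eval x (p n)
          - x^js * Polynomial.eval x (derivative^[js] (p n)))
        (x^js * Polynomial.eval x (derivative^[js] (p n)))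
      rw [sub_add_cancel, h2] at h3
      have h4 : ‖((n.descFactorial js : ℕ):ℂ) * Polynomial.eval x (p n)
            - x^js * Polynomial.eval x (derivative^[js] (p n))‖
          = ‖x^js * Polynomial.eval x (derivative^[js] (p n))
            - ((n.descFactorial js : ℕ):ℂ) * Polynomial.eval x (p n)‖ := by
        rw [show ((n.descFactorial js : ℕ):ℂ) * Polynomial.eval x (p n)
            - x^js * Polynomial.eval x (derivative^[js] (p n))
          = -(x^js * Polynomial.eval x (derivative^[js] (p n))
            - ((n.descFactorial js : ℕ):ℂ) * Polynomial.eval x (p n)) by ring,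
          norm_neg]
      rw [h4] at h3
      have h5 : (n:ℝ)^(js:ℕ)/2 ≤ ((n.descFactorial js : ℕ):ℝ) := hFn
      have h6 : (n:ℝ)^(js:ℕ)/2 * P ≤ ((n.descFactorial js : ℕ):ℝ) * P :=
        mul_le_mul_of_nonneg_right h5 (le_of_lt hP0)
      linarith
    -- lower bound for Q js eval
    have hQjs_lb : qs/2 * (ε*nd)^ts ≤ ‖(Q js).eval x‖ := by
      have h1 := eval_abs_ge (Q js) hjsne x (by rw [habsx]; exact hX1)
        (by rw [habsx]; exact hXX0)
      rw [habsx] at h1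
      rw [hqs]
      exact h1
    -- lower bound for the main term
    have hmainlb : (qs/8) * ((ε*nd)^(k-ms) * (n:ℝ)^(js:ℕ)) * P
        ≤ ‖(Q js).eval x * x^(k-js)
            * (x^js * Polynomial.eval x (derivative^[js] (p n)))‖ := by
      rw [norm_mul, norm_mul, norm_pow, habsx]
      have hnn : (0:ℝ) ≤ (n:ℝ) := le_of_lt hnR0
      have hexp : ts + (k - js) = k - ms := by omega
      have heq1 : (qs/8) * ((ε*nd)^(k-ms) * (n:ℝ)^(js:ℕ)) * P
          = (qs/2 * (ε*nd)^ts) * (ε*nd)^(k-js) * ((1/4) * (n:ℝ)^(js:ℕ) * P) := by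
        rw [show (ε*nd)^(k-ms) = (ε*nd)^ts * (ε*nd)^(k-js) by rw [← pow_add, hexp]]
        ring
      rw [heq1]
      apply mul_le_mul
      · exact mul_le_mul_of_nonneg_right hQjs_lb (pow_nonneg (le_of_lt hX0) _)
      · exact hWjs_lb
      · exact mul_nonneg (mul_nonneg (by norm_num) (pow_nonneg hnn _)) (le_of_lt hP0)
      · exact mul_nonneg (norm_nonneg _) (pow_nonneg (le_of_lt hX0) _)
    -- upper bound for each term in the erased sum
    have hterm : ∀ j ∈ (Finset.Icc 1 k).erase js,
        ‖(Q j).eval x * x^(k-j)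
            * (x^j * Polynomial.eval x (derivative^[j] (p n)))‖
        ≤ (∑ i ∈ Finset.range ((Q j).natDegree+1), ‖(Q j).coeff i‖)
            * ((3/2) * (ε ^ ((1:ℝ) + ((k:ℝ) - (ms:ℝ)))
              * (n:ℝ)^((j₀:ℝ) + d*(k:ℝ))) * P) := by
      intro j hjmem
      have hjIcc : j ∈ Finset.Icc 1 k := Finset.mem_of_mem_erase hjmem
      have hjne : j ≠ js := Finset.ne_of_mem_erase hjmem
      obtain ⟨hj1, hjk⟩ := Finset.mem_Icc.mp hjIcc
      have hBj0 : (0:ℝ) ≤ ∑ i ∈ Finset.range ((Q j).natDegree+1),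
          ‖(Q j).coeff i‖ :=
        Finset.sum_nonneg (fun _ _ => norm_nonneg _)
      have hrp1 : (0:ℝ) < ε ^ ((1:ℝ) + ((k:ℝ) - (ms:ℝ))) := Real.rpow_pos_of_pos hε0 _
      have hrp2 : (0:ℝ) < (n:ℝ)^((j₀:ℝ) + d*(k:ℝ)) := Real.rpow_pos_of_pos hnR0 _
      by_cases hQ0 : Q j = 0
      · rw [hQ0]
        simp only [Polynomial.eval_zero, zero_mul, norm_zero]
        apply mul_nonneg (Finset.sum_nonneg (fun _ _ => norm_nonneg _))
        apply mul_nonneg _ (le_of_lt hP0)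
        exact mul_nonneg (by norm_num) (le_of_lt (mul_pos hrp1 hrp2))
      · have hQb := eval_abs_le (Q j) x (by rw [habsx]; exact hX1)
        rw [habsx] at hQb
        have h1 := hW j hjk
        have h2 : ‖((n.descFactorial j : ℕ):ℂ) * Polynomial.eval x (p n)‖
            = ((n.descFactorial j : ℕ):ℝ) * P := by
          rw [norm_mul, Complex.norm_natCast]
        have h3 := norm_add_le
          (x^j * Polynomial.eval x (derivative^[j] (p n))
            - ((n.descFactorial j : ℕ):ℂ) * Polynomial.eval x (p n))
          (((n.descFactorial j : ℕ):ℂ) * Polynomial.eval x (p n))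
        rw [sub_add_cancel, h2] at h3
        have hWub : ‖x^j * Polynomial.eval x (derivative^[j] (p n))‖
            ≤ (3/2) * ((n.descFactorial j : ℕ):ℝ) * P := by linarith
        have hF : ((n.descFactorial j:ℕ):ℝ) ≤ (n:ℝ)^(j:ℕ) := by
          have h5 : n.descFactorial j ≤ n^j := Nat.descFactorial_le_pow n j
          exact_mod_cast h5
        have hKIj := hKIn j hjIcc hjne hQ0
        calc ‖(Q j).eval x * x^(k-j)
              * (x^j * Polynomial.eval x (derivative^[j] (p n)))‖
            = ‖(Q j).eval x‖ * (ε*nd)^(k-j)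
              * ‖x^j * Polynomial.eval x (derivative^[j] (p n))‖ := by
              rw [norm_mul, norm_mul, norm_pow, habsx]
          _ ≤ ((∑ i ∈ Finset.range ((Q j).natDegree+1), ‖(Q j).coeff i‖)
                * (ε*nd)^((Q j).natDegree)) * (ε*nd)^(k-j)
              * ((3/2) * ((n.descFactorial j : ℕ):ℝ) * P) := by
              apply mul_le_mul _ hWub (norm_nonneg _)
              · exact mul_nonneg (mul_nonneg hBj0 (pow_nonneg (le_of_lt hX0) _))
                  (pow_nonneg (le_of_lt hX0) _)
              · exact mul_le_mul_of_nonneg_right hQb (pow_nonneg (le_of_lt hX0) _)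
          _ = (∑ i ∈ Finset.range ((Q j).natDegree+1), ‖(Q j).coeff i‖)
              * ((3/2) * P) * ((ε*nd)^((Q j).natDegree + (k-j))
                * ((n.descFactorial j : ℕ):ℝ)) := by
              rw [pow_add]
              ring
          _ ≤ (∑ i ∈ Finset.range ((Q j).natDegree+1), ‖(Q j).coeff i‖)
              * ((3/2) * P) * ((ε*nd)^(k - (j - (Q j).natDegree)) * (n:ℝ)^(j:ℕ)) := by
              have hexp2 : (Q j).natDegree + (k-j) = k - (j - (Q j).natDegree) := by
                have := hQnatle j hjIcc
                omega
              rw [hexp2]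
              apply mul_le_mul_of_nonneg_left _
                (mul_nonneg hBj0 (mul_nonneg (by norm_num) (le_of_lt hP0)))
              exact mul_le_mul_of_nonneg_left hF (pow_nonneg (le_of_lt hX0) _)
          _ ≤ (∑ i ∈ Finset.range ((Q j).natDegree+1), ‖(Q j).coeff i‖)
              * ((3/2) * P) * (ε ^ ((1:ℝ) + ((k:ℝ) - (ms:ℝ)))
                * (n:ℝ)^((j₀:ℝ) + d*(k:ℝ))) := by
              exact mul_le_mul_of_nonneg_left hKIj
                (mul_nonneg hBj0 (mul_nonneg (by norm_num) (le_of_lt hP0)))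
          _ = (∑ i ∈ Finset.range ((Q j).natDegree+1), ‖(Q j).coeff i‖)
              * ((3/2) * (ε ^ ((1:ℝ) + ((k:ℝ) - (ms:ℝ)))
                * (n:ℝ)^((j₀:ℝ) + d*(k:ℝ))) * P) := by ring
    -- sum bound over erased set
    have hsumb : ‖∑ j ∈ (Finset.Icc 1 k).erase js,
          (Q j).eval x * x^(k-j) * (x^j * Polynomial.eval x (derivative^[j] (p n)))‖
        ≤ B * ((3/2) * (ε ^ ((1:ℝ) + ((k:ℝ) - (ms:ℝ)))
            * (n:ℝ)^((j₀:ℝ) + d*(k:ℝ))) * P) := by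
      refine le_trans (norm_sum_le _ _) ?_
      refine le_trans (Finset.sum_le_sum hterm) ?_
      rw [← Finset.sum_mul]
      apply mul_le_mul_of_nonneg_right _ (by
        apply mul_nonneg _ (le_of_lt hP0)
        apply mul_nonneg (by norm_num)
        exact mul_nonneg (Real.rpow_nonneg (le_of_lt hε0) _)
          (Real.rpow_nonneg (le_of_lt hnR0) _))
      rw [hB]
      apply Finset.sum_le_sum_of_subset_of_nonneg (Finset.erase_subset _ _)
      intro i _ _
      exact Finset.sum_nonneg (fun _ _ => norm_nonneg _)
    -- exponent conversions
    have hE1 : (ε*nd)^(k-ms) * (n:ℝ)^(js:ℕ)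
        = ε ^ ((k:ℝ)-(ms:ℝ)) * (n:ℝ)^((j₀:ℝ) + d*(k:ℝ)) := by
      rw [mul_pow]
      rw [← Real.rpow_natCast ε (k-ms), ← Real.rpow_natCast nd (k-ms),
        ← Real.rpow_natCast (n:ℝ) js]
      rw [hnd, ← Real.rpow_mul (le_of_lt hnR0)]
      rw [mul_assoc, ← Real.rpow_add hnR0]
      have hc : ((k - ms : ℕ):ℝ) = (k:ℝ) - (ms:ℝ) := by
        push_cast [Nat.cast_sub hmsk]; ring
      rw [hc, show d * ((k:ℝ) - (ms:ℝ)) + (js:ℝ) = (j₀:ℝ) + d*(k:ℝ) by linarith [hdms]]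
    have hE2 : (ε*nd)^k = ε^((k:ℝ)) * (n:ℝ)^(d*(k:ℝ)) := by
      rw [mul_pow]
      rw [← Real.rpow_natCast ε k, ← Real.rpow_natCast nd k]
      rw [hnd, ← Real.rpow_mul (le_of_lt hnR0)]
    have hE3 : A*(n:ℝ)^(j₀:ℕ)*P*((ε*nd)^k)
        = A * ε^((k:ℝ)) * (n:ℝ)^((j₀:ℝ)+d*(k:ℝ)) * P := by
      rw [hE2, ← Real.rpow_natCast (n:ℝ) j₀, Real.rpow_add hnR0]
      ring
    have hC0 : 0 < ε ^ ((k:ℝ)-(ms:ℝ)) * (n:ℝ)^((j₀:ℝ) + d*(k:ℝ)) * P :=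
      mul_pos (mul_pos (Real.rpow_pos_of_pos hε0 _) (Real.rpow_pos_of_pos hnR0 _)) hP0
    -- triangle bound for the main term using hgjs
    have hup1 : ‖lam n * Polynomial.eval x (p n) * x^k‖
        = ‖lam n‖ * P * (ε*nd)^k := by
      rw [norm_mul, norm_mul, norm_pow, habsx]
    have htri : ‖(Q js).eval x * x^(k-js)
          * (x^js * Polynomial.eval x (derivative^[js] (p n)))‖
        ≤ ‖lam n‖ * P * (ε*nd)^k
          + B * ((3/2) * (ε ^ ((1:ℝ) + ((k:ℝ) - (ms:ℝ)))
              * (n:ℝ)^((j₀:ℝ) + d*(k:ℝ))) * P) := by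
      rw [hgjs, sub_eq_add_neg]
      refine le_trans (norm_add_le _ _) ?_
      rw [norm_neg, hup1]
      exact add_le_add le_rfl hsumb
    -- lam-term bound
    have hlamt : ‖lam n‖ * P * (ε*nd)^k
        ≤ A * ε * (ε ^ ((k:ℝ)-(ms:ℝ)) * (n:ℝ)^((j₀:ℝ) + d*(k:ℝ)) * P) := by
      have h1 : ‖lam n‖ * P * (ε*nd)^k ≤ A*(n:ℝ)^(j₀:ℕ)*P*((ε*nd)^k) := by
        apply mul_le_mul_of_nonneg_right _ (pow_nonneg (le_of_lt hX0) _)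
        exact mul_le_mul_of_nonneg_right hlamb (le_of_lt hP0)
      rw [hE3] at h1
      refine le_trans h1 ?_
      have hεk : ε^((k:ℝ)) = ε^((ms:ℝ)) * ε^((k:ℝ)-(ms:ℝ)) := by
        rw [← Real.rpow_add hε0]
        congr 1
        ring
      have hεms : ε^((ms:ℝ)) ≤ ε := by
        have h2 : ε^((ms:ℝ)) ≤ ε^((1:ℝ)) := by
          apply Real.rpow_le_rpow_of_exponent_ge hε0 hε1
          exact_mod_cast hms1
        rwa [Real.rpow_one] at h2
      calc A * ε^((k:ℝ)) * (n:ℝ)^((j₀:ℝ)+d*(k:ℝ)) * P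
          = (A * ε^((ms:ℝ))) * (ε^((k:ℝ)-(ms:ℝ)) * (n:ℝ)^((j₀:ℝ)+d*(k:ℝ)) * P) := by
            rw [hεk]; ring
        _ ≤ (A * ε) * (ε^((k:ℝ)-(ms:ℝ)) * (n:ℝ)^((j₀:ℝ)+d*(k:ℝ)) * P) := by
            apply mul_le_mul_of_nonneg_right _ (le_of_lt hC0)
            exact mul_le_mul_of_nonneg_left hεms hA0
        _ = A * ε * (ε ^ ((k:ℝ)-(ms:ℝ)) * (n:ℝ)^((j₀:ℝ) + d*(k:ℝ)) * P) := by ring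
    -- B-term rewrite
    have hεsplit : ε^((1:ℝ)+((k:ℝ)-(ms:ℝ))) = ε * ε^((k:ℝ)-(ms:ℝ)) := by
      rw [Real.rpow_add hε0, Real.rpow_one]
    have hBt : B * ((3/2) * (ε ^ ((1:ℝ) + ((k:ℝ) - (ms:ℝ)))
          * (n:ℝ)^((j₀:ℝ) + d*(k:ℝ))) * P)
        = (3/2) * B * ε * (ε ^ ((k:ℝ)-(ms:ℝ)) * (n:ℝ)^((j₀:ℝ) + d*(k:ℝ)) * P) := by
      rw [hεsplit]
      ring
    -- main lower bound in converted form
    have hmainlb' : (qs/8) * (ε ^ ((k:ℝ)-(ms:ℝ)) * (n:ℝ)^((j₀:ℝ) + d*(k:ℝ)) * P)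
        ≤ ‖(Q js).eval x * x^(k-js)
            * (x^js * Polynomial.eval x (derivative^[js] (p n)))‖ := by
      refine le_trans (le_of_eq ?_) hmainlb
      rw [← hE1]
      ring
    -- final contradiction
    have hfinal : (qs/8) * (ε ^ ((k:ℝ)-(ms:ℝ)) * (n:ℝ)^((j₀:ℝ) + d*(k:ℝ)) * P)
        ≤ ((A + 2*B) * ε) * (ε ^ ((k:ℝ)-(ms:ℝ)) * (n:ℝ)^((j₀:ℝ) + d*(k:ℝ)) * P) := by
      have h1 := le_trans hmainlb' htri
      rw [hBt] at h1
      have h2 : A * ε * (ε ^ ((k:ℝ)-(ms:ℝ)) * (n:ℝ)^((j₀:ℝ) + d*(k:ℝ)) * P)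
          + (3/2) * B * ε * (ε ^ ((k:ℝ)-(ms:ℝ)) * (n:ℝ)^((j₀:ℝ) + d*(k:ℝ)) * P)
          ≤ ((A + 2*B) * ε) * (ε ^ ((k:ℝ)-(ms:ℝ)) * (n:ℝ)^((j₀:ℝ) + d*(k:ℝ)) * P) := by
        have h3 : (0:ℝ) ≤ B * ε := mul_nonneg hB0 (le_of_lt hε0)
        have h4 : A * ε + (3/2) * (B * ε) ≤ (A + 2*B) * ε := by linarith only [h3]
        calc A * ε * (ε ^ ((k:ℝ)-(ms:ℝ)) * (n:ℝ)^((j₀:ℝ) + d*(k:ℝ)) * P)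
              + (3/2) * B * ε * (ε ^ ((k:ℝ)-(ms:ℝ)) * (n:ℝ)^((j₀:ℝ) + d*(k:ℝ)) * P)
            = (A * ε + (3/2) * (B * ε))
              * (ε ^ ((k:ℝ)-(ms:ℝ)) * (n:ℝ)^((j₀:ℝ) + d*(k:ℝ)) * P) := by ring
          _ ≤ ((A + 2*B) * ε)
              * (ε ^ ((k:ℝ)-(ms:ℝ)) * (n:ℝ)^((j₀:ℝ) + d*(k:ℝ)) * P) :=
              mul_le_mul_of_nonneg_right h4 (le_of_lt hC0)
      linarith only [h1, h2, hlamt]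
    have hlt : ((A + 2*B) * ε) * (ε ^ ((k:ℝ)-(ms:ℝ)) * (n:ℝ)^((j₀:ℝ) + d*(k:ℝ)) * P)
        < (qs/8) * (ε ^ ((k:ℝ)-(ms:ℝ)) * (n:ℝ)^((j₀:ℝ) + d*(k:ℝ)) * P) :=
      mul_lt_mul_of_pos_right hεlt hC0
    linarith only [hfinal, hlt]



  obtain ⟨N, hN⟩ := Filter.eventually_atTop.mp hMain
  exact ⟨N, hN⟩
end
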